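/- arXiv:gr-qc/0604112 — 4 statements merged into one kernel-verified Lean document; each statement's English description precedes it below -/
import Mathlib

section
/- Let ν₁ and ν₂ be Borel measures on ℝ such that for every n ∈ ℕ the function x ↦ xⁿ is integrable with respect to both measures and ∫ xⁿ dν₁ = ∫ xⁿ dν₂. Assume that the subspace of (classes of) polynomial functions is dense in L²(ν₁), and that the densely defined symmetric operator T in L²(ν₁), with domain the polynomial functions and given by (T p)(x) = x·p(x), is essentially self-adjoint (its closure equals its adjoint). Then ν₁ = ν₂. -/
open MeasureTheory Polynomial Filter Topology ComplexConjugate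
open scoped ENNReal NNReal InnerProductSpace Pointwise

noncomputable section
namespace Stmt5

def Pev (p : Polynomial ℂ) : ℝ → ℂ := fun x => p.eval (x:ℂ)

lemma pev_cont (p : ℂ[X]) : Continuous (Pev p) :=
  p.continuous_aeval.comp Complex.continuous_ofReal

lemma pev_conj (p : ℂ[X]) (x : ℝ) :
    conj (Pev p x) = Pev (p.map (starRingEnd ℂ)) x := by
  induction p using Polynomial.induction_on' with
  | add f g hf hg =>
      simp only [Pev, eval_add, map_add, Polynomial.map_add] at *
      rw [hf, hg]
  | monomial n a => simp [Pev, Polynomial.map_monomial, Complex.conj_ofReal]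

lemma pev_conj_mul (p q : ℂ[X]) (x : ℝ) :
    Pev (p.map (starRingEnd ℂ) * q) x = conj (Pev p x) * Pev q x := by
  rw [pev_conj]; simp only [Pev, eval_mul]

lemma pev_sum_range (p : ℂ[X]) (x : ℝ) :
    Pev p x = ∑ n ∈ Finset.range (p.natDegree + 1), p.coeff n * ((x^n : ℝ) : ℂ) := by
  rw [Pev, Polynomial.eval_eq_sum_range]; push_cast; rfl

lemma integrable_pev {ν : Measure ℝ} (hmom : ∀ n : ℕ, Integrable (fun x : ℝ => x ^ n) ν)
    (p : ℂ[X]) : Integrable (Pev p) ν := by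
  have : Pev p = fun x => ∑ n ∈ Finset.range (p.natDegree + 1), p.coeff n * ((x^n : ℝ) : ℂ) := by
    funext x; exact pev_sum_range p x
  rw [this]
  exact integrable_finset_sum _ fun n _ => ((hmom n).ofReal.const_mul _)

lemma integral_pev {ν : Measure ℝ} (hmom : ∀ n : ℕ, Integrable (fun x : ℝ => x ^ n) ν)
    (p : ℂ[X]) : ∫ x, Pev p x ∂ν
      = ∑ n ∈ Finset.range (p.natDegree + 1), p.coeff n * ((∫ x, x^n ∂ν : ℝ) : ℂ) :=
  calc ∫ x, Pev p x ∂ν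
      = ∫ x, ∑ n ∈ Finset.range (p.natDegree+1), p.coeff n * ((x^n:ℝ):ℂ) ∂ν :=
        integral_congr_ae (.of_forall (pev_sum_range p))
    _ = ∑ n ∈ Finset.range (p.natDegree+1), ∫ x, p.coeff n * ((x^n:ℝ):ℂ) ∂ν :=
        integral_finset_sum _ (fun n _ => ((hmom n).ofReal.const_mul _))
    _ = ∑ n ∈ Finset.range (p.natDegree+1), p.coeff n * ((∫ x, x^n ∂ν : ℝ) : ℂ) := by
        refine Finset.sum_congr rfl fun n _ => ?_
        rw [integral_const_mul]; congr 1; exact integral_ofReal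

lemma integral_pev_eq {ν₁ ν₂ : Measure ℝ}
    (hmom₁ : ∀ n : ℕ, Integrable (fun x : ℝ => x ^ n) ν₁)
    (hmom₂ : ∀ n : ℕ, Integrable (fun x : ℝ => x ^ n) ν₂)
    (heq : ∀ n : ℕ, ∫ x, x ^ n ∂ν₁ = ∫ x, x ^ n ∂ν₂) (p : ℂ[X]) :
    ∫ x, Pev p x ∂ν₁ = ∫ x, Pev p x ∂ν₂ := by
  rw [integral_pev hmom₁, integral_pev hmom₂]
  simp_rw [heq]

lemma memL2_pev {ν : Measure ℝ} (hmom : ∀ n : ℕ, Integrable (fun x : ℝ => x ^ n) ν)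
    (p : ℂ[X]) : MemLp (Pev p) 2 ν := by
  rw [memLp_two_iff_integrable_sq_norm ((pev_cont p).aestronglyMeasurable)]
  have : (fun x => ‖Pev p x‖^2) = fun x => (Pev (p.map (starRingEnd ℂ) * p) x).re := by
    funext x
    rw [pev_conj_mul]
    rw [Complex.mul_re]
    simp [Complex.conj_re, Complex.conj_im, Complex.sq_norm,
      Complex.normSq_apply]
  rw [this]
  exact (integrable_pev hmom _).re

variable {ν : Measure ℝ}

def PL (hmom : ∀ n : ℕ, Integrable (fun x : ℝ => x ^ n) ν) (p : ℂ[X]) : Lp ℂ 2 ν :=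
  (memL2_pev hmom p).toLp (Pev p)

lemma coeFn_PL (hmom : ∀ n : ℕ, Integrable (fun x : ℝ => x ^ n) ν) (p : ℂ[X]) :
    PL hmom p =ᵐ[ν] Pev p := MemLp.coeFn_toLp _

lemma pev_add (p q : ℂ[X]) : Pev (p + q) = Pev p + Pev q := funext fun x => by simp [Pev]
lemma pev_sub (p q : ℂ[X]) : Pev (p - q) = Pev p - Pev q := funext fun x => by simp [Pev]
lemma pev_smul (c : ℂ) (p : ℂ[X]) : Pev (c • p) = c • Pev p := funext fun x => by simp [Pev]

lemma PL_add (hmom : ∀ n : ℕ, Integrable (fun x : ℝ => x ^ n) ν) (p q : ℂ[X]) :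
    PL hmom (p + q) = PL hmom p + PL hmom q := by
  rw [PL, PL, PL, ← MemLp.toLp_add]
  exact MemLp.toLp_congr _ _ (Eventually.of_forall fun x => by simp [Pev])

lemma PL_sub (hmom : ∀ n : ℕ, Integrable (fun x : ℝ => x ^ n) ν) (p q : ℂ[X]) :
    PL hmom (p - q) = PL hmom p - PL hmom q := by
  rw [PL, PL, PL, ← MemLp.toLp_sub]
  exact MemLp.toLp_congr _ _ (Eventually.of_forall fun x => by simp [Pev])

lemma PL_smul (hmom : ∀ n : ℕ, Integrable (fun x : ℝ => x ^ n) ν) (c : ℂ) (p : ℂ[X]) :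
    PL hmom (c • p) = c • PL hmom p := by
  rw [PL, PL, ← MemLp.toLp_const_smul]
  exact MemLp.toLp_congr _ _ (Eventually.of_forall fun x => by simp [Pev])

lemma PL_zero (hmom : ∀ n : ℕ, Integrable (fun x : ℝ => x ^ n) ν) :
    PL hmom 0 = 0 := by
  have h := PL_sub hmom 0 0
  rw [sub_zero] at h
  rw [h, sub_self]

lemma inner_PL_right (hmom : ∀ n : ℕ, Integrable (fun x : ℝ => x ^ n) ν) (p : ℂ[X])
    (f : Lp ℂ 2 ν) :
    inner (𝕜 := ℂ) (PL hmom p) f = ∫ x, conj (Pev p x) * f x ∂ν := by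
  rw [MeasureTheory.L2.inner_def]
  refine integral_congr_ae ?_
  filter_upwards [coeFn_PL hmom p] with x hx
  rw [RCLike.inner_apply, hx, mul_comm]

lemma inner_PL_PL (hmom : ∀ n : ℕ, Integrable (fun x : ℝ => x ^ n) ν) (p q : ℂ[X]) :
    inner (𝕜 := ℂ) (PL hmom p) (PL hmom q)
      = ∫ x, Pev (p.map (starRingEnd ℂ) * q) x ∂ν := by
  rw [inner_PL_right]
  refine integral_congr_ae ?_
  filter_upwards [coeFn_PL hmom q] with x hx
  rw [hx, pev_conj_mul]

lemma norm_PL_eq {ν₁ ν₂ : Measure ℝ}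
    (hmom₁ : ∀ n : ℕ, Integrable (fun x : ℝ => x ^ n) ν₁)
    (hmom₂ : ∀ n : ℕ, Integrable (fun x : ℝ => x ^ n) ν₂)
    (heq : ∀ n : ℕ, ∫ x, x ^ n ∂ν₁ = ∫ x, x ^ n ∂ν₂) (p : ℂ[X]) :
    ‖PL hmom₁ p‖ = ‖PL hmom₂ p‖ := by
  have key : inner (𝕜 := ℂ) (PL hmom₁ p) (PL hmom₁ p)
      = inner (𝕜 := ℂ) (PL hmom₂ p) (PL hmom₂ p) := by
    rw [inner_PL_PL, inner_PL_PL, integral_pev_eq hmom₁ hmom₂ heq]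
  have h2 : ‖PL hmom₁ p‖^2 = ‖PL hmom₂ p‖^2 := by
    rw [← inner_self_eq_norm_sq (𝕜 := ℂ), ← inner_self_eq_norm_sq (𝕜 := ℂ), key]
  have := congrArg Real.sqrt h2
  rwa [Real.sqrt_sq (norm_nonneg _), Real.sqrt_sq (norm_nonneg _)] at this

lemma abs_im_le_sub (z : ℂ) (x : ℝ) : |z.im| ≤ ‖(x:ℂ) - z‖ := by
  have h := Complex.abs_im_le_norm ((x:ℂ) - z)
  simpa [Complex.sub_im, Complex.ofReal_im, abs_neg] using h

lemma norm_PL_le (hmom : ∀ n : ℕ, Integrable (fun x : ℝ => x ^ n) ν)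
    (z : ℂ) (hz : z.im ≠ 0) (r : ℂ[X]) :
    ‖PL hmom r‖ ≤ |z.im|⁻¹ * ‖PL hmom ((X - C z) * r)‖ := by
  have him : (0:ℝ) < |z.im| := abs_pos.mpr hz
  have hpt : ∀ x : ℝ, ‖Pev r x‖ ≤ ‖(|z.im|⁻¹ : ℝ) • Pev ((X - C z) * r) x‖ := by
    intro x
    have h1 : Pev ((X - C z) * r) x = ((x:ℂ) - z) * Pev r x := by
      simp [Pev, mul_comm]
    rw [norm_smul, h1, norm_mul, Real.norm_eq_abs, abs_inv, abs_abs]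
    rw [← mul_assoc]
    have : (1:ℝ) ≤ |z.im|⁻¹ * ‖(x:ℂ) - z‖ :=
      (one_le_inv_mul₀ him).mpr (abs_im_le_sub z x)
    nlinarith [norm_nonneg (Pev r x), norm_nonneg ((x:ℂ) - z)]
  have hsn : eLpNorm (Pev r) 2 ν ≤ eLpNorm ((|z.im|⁻¹ : ℝ) • Pev ((X - C z) * r)) 2 ν :=
    eLpNorm_mono hpt
  rw [eLpNorm_const_smul] at hsn
  have hfin : eLpNorm (Pev ((X - C z) * r)) 2 ν < ⊤ := (memL2_pev hmom _).2
  have hn1 : ‖PL hmom r‖ = (eLpNorm (Pev r) 2 ν).toReal := by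
    rw [PL, Lp.norm_toLp]
  have hn2 : ‖PL hmom ((X - C z) * r)‖ = (eLpNorm (Pev ((X - C z) * r)) 2 ν).toReal := by
    rw [PL, Lp.norm_toLp]
  rw [hn1, hn2]
  set c : ℝ := |z.im|⁻¹ with hc
  have step1 : (eLpNorm (Pev r) 2 ν).toReal
      ≤ ((‖c‖₊ : ℝ≥0∞) * eLpNorm (Pev ((X - C z) * r)) 2 ν).toReal := by
    apply ENNReal.toReal_mono _ hsn
    exact ENNReal.mul_ne_top ENNReal.coe_ne_top hfin.ne
  have step2 : ((‖c‖₊ : ℝ≥0∞) * eLpNorm (Pev ((X - C z) * r)) 2 ν).toReal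
      = c * (eLpNorm (Pev ((X - C z) * r)) 2 ν).toReal := by
    rw [ENNReal.toReal_mul, ENNReal.coe_toReal, coe_nnnorm, Real.norm_eq_abs, hc, abs_inv, abs_abs]
  rw [step2] at step1
  exact step1

lemma exists_ae_subseq {fk : ℕ → Lp ℂ 2 ν} {f : Lp ℂ 2 ν} (h : Tendsto fk atTop (𝓝 f)) :
    ∃ ns : ℕ → ℕ, StrictMono ns ∧
      ∀ᵐ x ∂ν, Tendsto (fun i => fk (ns i) x) atTop (𝓝 (f x)) := by
  have h' := (Lp.tendsto_Lp_iff_tendsto_eLpNorm' fk f).mp h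
  exact (tendstoInMeasure_of_tendsto_eLpNorm (by norm_num)
    (fun n => Lp.aestronglyMeasurable _) (Lp.aestronglyMeasurable _) h').exists_seq_tendsto_ae

section Hilbert
variable {E : Type*} [NormedAddCommGroup E] [InnerProductSpace ℂ E] [CompleteSpace E]

lemma adjoint_isClosed (T : E →ₗ.[ℂ] E) (hdd : Dense (T.domain : Set E)) :
    T.adjoint.IsClosed := by
  have hfa := T.adjoint_isFormalAdjoint hdd
  rw [LinearPMap.IsClosed]
  refine IsSeqClosed.isClosed ?_
  intro xy ab hmem hlim
  choose y hy1 hy2 using fun n => (T.adjoint.mem_graph_iff.mp (hmem n))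
  have lim1 : Tendsto (fun n => ((y n : E))) atTop (𝓝 ab.1) := by
    have h1 : Tendsto (fun n => (xy n).1) atTop (𝓝 ab.1) :=
      (continuous_fst.tendsto ab).comp hlim
    simpa only [hy1] using h1
  have lim2 : Tendsto (fun n => T.adjoint (y n)) atTop (𝓝 ab.2) := by
    have h2 : Tendsto (fun n => (xy n).2) atTop (𝓝 ab.2) :=
      (continuous_snd.tendsto ab).comp hlim
    simpa only [hy2] using h2
  have key : ∀ x : T.domain, inner (𝕜 := ℂ) ab.2 (x : E) = inner (𝕜 := ℂ) ab.1 (T x) := by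
    intro x
    have h1 : Tendsto (fun n => inner (𝕜 := ℂ) (T.adjoint (y n)) (x : E)) atTop
        (𝓝 (inner (𝕜 := ℂ) ab.2 (x : E))) := lim2.inner tendsto_const_nhds
    have h2 : Tendsto (fun n => inner (𝕜 := ℂ) ((y n : E)) (T x)) atTop
        (𝓝 (inner (𝕜 := ℂ) ab.1 (T x))) := lim1.inner tendsto_const_nhds
    have heq : ∀ n, inner (𝕜 := ℂ) (T.adjoint (y n)) (x : E)
        = inner (𝕜 := ℂ) ((y n : E)) (T x) := fun n => hfa (y n) x
    simp_rw [heq] at h1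
    exact tendsto_nhds_unique h1 h2
  have hmem' : ab.1 ∈ T.adjoint.domain :=
    T.mem_adjoint_domain_of_exists ab.1 ⟨ab.2, fun x => key x⟩
  refine T.adjoint.mem_graph_iff.mpr ⟨⟨ab.1, hmem'⟩, rfl, ?_⟩
  exact LinearPMap.adjoint_apply_eq hdd ⟨ab.1, hmem'⟩ (fun x => key x)

end Hilbert

section Dense

variable {ν₁ : Measure ℝ}
  (hmom₁ : ∀ n : ℕ, Integrable (fun x : ℝ => x ^ n) ν₁)
  (T : Lp ℂ 2 ν₁ →ₗ.[ℂ] Lp ℂ 2 ν₁)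
  (hdom : ∀ g : Lp ℂ 2 ν₁, g ∈ T.domain ↔
      ∃ p : Polynomial ℂ, (g : ℝ → ℂ) =ᵐ[ν₁] fun x : ℝ => p.eval (x : ℂ))
  (hdd : Dense (T.domain : Set (Lp ℂ 2 ν₁)))
  (haction : ∀ (g : T.domain) (p : Polynomial ℂ),
      ((g : Lp ℂ 2 ν₁) : ℝ → ℂ) =ᵐ[ν₁] (fun x : ℝ => p.eval (x : ℂ)) →
      (T g : ℝ → ℂ) =ᵐ[ν₁] fun x : ℝ => (x : ℂ) * p.eval (x : ℂ))
  (hsymm : ∀ f g : T.domain,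
      inner (𝕜 := ℂ) (T f) ((g : Lp ℂ 2 ν₁)) = inner (𝕜 := ℂ) ((f : Lp ℂ 2 ν₁)) (T g))
  (hesa : T.closure = T.adjoint)

include hdom hdd haction hsymm hesa in
theorem mem_closure_range_sub (z : ℂ) (hz : z.im ≠ 0) (f : Lp ℂ 2 ν₁) :
    f ∈ closure (Set.range (fun q : ℂ[X] => PL hmom₁ ((X - C z) * q))) := by
  set R : Submodule ℂ (Lp ℂ 2 ν₁) :=
    { carrier := Set.range (fun q : ℂ[X] => PL hmom₁ ((X - C z) * q))
      add_mem' := by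
        rintro _ _ ⟨q1, rfl⟩ ⟨q2, rfl⟩
        exact ⟨q1 + q2, by show PL hmom₁ _ = _; rw [mul_add, PL_add]⟩
      zero_mem' := ⟨0, by show PL hmom₁ _ = _; rw [mul_zero, PL_zero]⟩
      smul_mem' := by
        rintro c _ ⟨q, rfl⟩
        exact ⟨c • q, by show PL hmom₁ _ = _; rw [mul_smul_comm, PL_smul]⟩ } with hR
  -- main step: the orthogonal complement of R is trivial
  have horth : Rᗮ = ⊥ := by
    rw [Submodule.eq_bot_iff]
    intro y hy
    have hy' : ∀ q : ℂ[X], inner (𝕜 := ℂ) (PL hmom₁ ((X - C z) * q)) y = 0 := by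
      intro q
      exact (Submodule.mem_orthogonal R y).mp hy _ ⟨q, rfl⟩
    -- y is in the domain of the adjoint, with T† y = conj z • y
    have key : ∀ x : T.domain, inner (𝕜 := ℂ) ((starRingEnd ℂ z) • y) ((x : Lp ℂ 2 ν₁))
        = inner (𝕜 := ℂ) y (T x) := by
      intro x
      obtain ⟨p, hp⟩ := (hdom (x : Lp ℂ 2 ν₁)).mp x.2
      have hTx : T x = PL hmom₁ ((X - C z) * p) + z • (x : Lp ℂ 2 ν₁) := by
        apply Lp.ext
        filter_upwards [haction x p hp, coeFn_PL hmom₁ ((X - C z) * p),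
          Lp.coeFn_add (PL hmom₁ ((X - C z) * p)) (z • (x : Lp ℂ 2 ν₁)),
          Lp.coeFn_smul z (x : Lp ℂ 2 ν₁), hp] with t h1 h2 h3 h4 h5
        rw [h1, h3, Pi.add_apply, h2, h4, Pi.smul_apply, h5]
        show (t:ℂ) * p.eval (t:ℂ) = Pev ((X - C z) * p) t + z * p.eval (t:ℂ)
        simp [Pev]
        ring
      rw [hTx, inner_add_right, inner_smul_right]
      have h0 : inner (𝕜 := ℂ) y (PL hmom₁ ((X - C z) * p)) = 0 := by
        rw [← inner_conj_symm, hy' p, map_zero]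
      rw [h0, zero_add, inner_smul_left]
      simp
    have hmem : y ∈ T.adjoint.domain :=
      T.mem_adjoint_domain_of_exists y ⟨(starRingEnd ℂ z) • y, fun x => key x⟩
    have happ : T.adjoint ⟨y, hmem⟩ = (starRingEnd ℂ z) • y :=
      LinearPMap.adjoint_apply_eq hdd ⟨y, hmem⟩ (fun x => key x)
    have hgr : (y, (starRingEnd ℂ z) • y) ∈ T.adjoint.graph :=
      T.adjoint.mem_graph_iff.mpr ⟨⟨y, hmem⟩, rfl, happ⟩
    have hclos : T.IsClosable := by
      have hfa : T.IsFormalAdjoint T := fun a b => hsymm a b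
      exact (adjoint_isClosed T hdd).isClosable.leIsClosable (hfa.le_adjoint hdd)
    have hgr2 : (y, (starRingEnd ℂ z) • y) ∈ closure (T.graph : Set (Lp ℂ 2 ν₁ × Lp ℂ 2 ν₁)) := by
      rw [← hesa] at hgr
      rw [← hclos.graph_closure_eq_closure_graph] at hgr
      rw [← SetLike.mem_coe, Submodule.topologicalClosure_coe] at hgr
      exact hgr
    obtain ⟨s, hs_mem, hs_lim⟩ := mem_closure_iff_seq_limit.mp hgr2
    choose w hw1 hw2 using fun n => T.mem_graph_iff.mp (hs_mem n)
    have lim1 : Tendsto (fun n => ((w n : Lp ℂ 2 ν₁))) atTop (𝓝 y) := by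
      have h1 : Tendsto (fun n => (s n).1) atTop (𝓝 y) :=
        (continuous_fst.tendsto _).comp hs_lim
      simpa only [hw1] using h1
    have lim2 : Tendsto (fun n => T (w n)) atTop (𝓝 ((starRingEnd ℂ z) • y)) := by
      have h2 : Tendsto (fun n => (s n).2) atTop (𝓝 ((starRingEnd ℂ z) • y)) :=
        (continuous_snd.tendsto _).comp hs_lim
      simpa only [hw2] using h2
    have hinner : inner (𝕜 := ℂ) ((starRingEnd ℂ z) • y) y
        = inner (𝕜 := ℂ) y ((starRingEnd ℂ z) • y) := by
      have h1 := Filter.Tendsto.inner (𝕜 := ℂ) lim2 lim1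
      have h2 := Filter.Tendsto.inner (𝕜 := ℂ) lim1 lim2
      simp_rw [fun n => hsymm (w n) (w n)] at h1
      exact tendsto_nhds_unique h1 h2
    rw [inner_smul_left, inner_smul_right, RingHomCompTriple.comp_apply] at hinner
    have hzz : z * inner (𝕜 := ℂ) y y = (starRingEnd ℂ z) * inner (𝕜 := ℂ) y y := by
      simpa using hinner
    have hyy : inner (𝕜 := ℂ) y y = 0 := by
      by_contra hne
      have h' : z = starRingEnd ℂ z := mul_right_cancel₀ hne hzz
      rw [eq_comm, Complex.conj_eq_iff_im] at h'
      exact hz h'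
    exact inner_self_eq_zero.mp hyy
  have hdense : Dense (R : Set (Lp ℂ 2 ν₁)) :=
    Submodule.dense_iff_topologicalClosure_eq_top.mpr
      (Submodule.topologicalClosure_eq_top_iff.mpr horth)
  exact hdense f

end Dense
section Sim

variable {ν₁ ν₂ : Measure ℝ}

def Sim (hmom₁ : ∀ n : ℕ, Integrable (fun x : ℝ => x ^ n) ν₁)
    (hmom₂ : ∀ n : ℕ, Integrable (fun x : ℝ => x ^ n) ν₂) (F : ℝ → ℂ) : Prop :=
  ∃ (h₁ : MemLp F 2 ν₁) (h₂ : MemLp F 2 ν₂) (pk : ℕ → ℂ[X]),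
    Tendsto (fun k => PL hmom₁ (pk k)) atTop (𝓝 (h₁.toLp F)) ∧
    Tendsto (fun k => PL hmom₂ (pk k)) atTop (𝓝 (h₂.toLp F))

variable (hmom₁ : ∀ n : ℕ, Integrable (fun x : ℝ => x ^ n) ν₁)
  (hmom₂ : ∀ n : ℕ, Integrable (fun x : ℝ => x ^ n) ν₂)
  (heq : ∀ n : ℕ, ∫ x, x ^ n ∂ν₁ = ∫ x, x ^ n ∂ν₂)

lemma sim_pev (p : ℂ[X]) : Sim hmom₁ hmom₂ (Pev p) :=
  ⟨memL2_pev hmom₁ p, memL2_pev hmom₂ p, fun _ => p,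
    tendsto_const_nhds, tendsto_const_nhds⟩

include heq in
lemma sim_integral {F : ℝ → ℂ} (hF : Sim hmom₁ hmom₂ F) :
    ∫ x, F x ∂ν₁ = ∫ x, F x ∂ν₂ := by
  obtain ⟨h₁, h₂, pk, l1, l2⟩ := hF
  have e : ∀ (ν : Measure ℝ) (hmom : ∀ n : ℕ, Integrable (fun x : ℝ => x ^ n) ν)
      (h : MemLp F 2 ν), inner (𝕜 := ℂ) (PL hmom 1) (h.toLp F) = ∫ x, F x ∂ν := by
    intro ν hmom h
    rw [inner_PL_right]
    refine integral_congr_ae ?_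
    filter_upwards [h.coeFn_toLp] with x hx
    rw [hx]
    simp [Pev]
  have c1 : Tendsto (fun k => inner (𝕜 := ℂ) (PL hmom₁ 1) (PL hmom₁ (pk k))) atTop
      (𝓝 (inner (𝕜 := ℂ) (PL hmom₁ 1) (h₁.toLp F))) :=
    Filter.Tendsto.inner (𝕜 := ℂ) tendsto_const_nhds l1
  have c2 : Tendsto (fun k => inner (𝕜 := ℂ) (PL hmom₂ 1) (PL hmom₂ (pk k))) atTop
      (𝓝 (inner (𝕜 := ℂ) (PL hmom₂ 1) (h₂.toLp F))) :=
    Filter.Tendsto.inner (𝕜 := ℂ) tendsto_const_nhds l2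
  have hval : ∀ k, inner (𝕜 := ℂ) (PL hmom₁ 1) (PL hmom₁ (pk k))
      = inner (𝕜 := ℂ) (PL hmom₂ 1) (PL hmom₂ (pk k)) := by
    intro k
    rw [inner_PL_PL, inner_PL_PL, integral_pev_eq hmom₁ hmom₂ heq]
  simp_rw [hval] at c1
  rw [← e ν₁ hmom₁ h₁, ← e ν₂ hmom₂ h₂]
  exact tendsto_nhds_unique c1 c2

lemma identify {ν : Measure ℝ} (hmom : ∀ n : ℕ, Integrable (fun x : ℝ => x ^ n) ν)
    (z : ℂ) (hz : z.im ≠ 0) (q : ℕ → ℂ[X]) (g f : Lp ℂ 2 ν) {F : ℝ → ℂ}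
    (hf : ⇑f =ᵐ[ν] F)
    (hA : Tendsto (fun k => PL hmom ((X - C z) * q k)) atTop (𝓝 f))
    (hg : Tendsto (fun k => PL hmom (q k)) atTop (𝓝 g)) :
    ⇑g =ᵐ[ν] fun x : ℝ => ((x:ℂ) - z)⁻¹ * F x := by
  obtain ⟨ns, hns, hae1⟩ := exists_ae_subseq hg
  have hA' : Tendsto (fun i => PL hmom ((X - C z) * q (ns i))) atTop (𝓝 f) :=
    hA.comp hns.tendsto_atTop
  obtain ⟨ms, hms, hae2⟩ := exists_ae_subseq hA'
  have hco1 : ∀ᵐ x ∂ν, ∀ k, (PL hmom (q k) : ℝ → ℂ) x = Pev (q k) x :=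
    ae_all_iff.mpr fun k => coeFn_PL hmom (q k)
  have hco2 : ∀ᵐ x ∂ν, ∀ k, (PL hmom ((X - C z) * q k) : ℝ → ℂ) x
      = Pev ((X - C z) * q k) x :=
    ae_all_iff.mpr fun k => coeFn_PL hmom ((X - C z) * q k)
  filter_upwards [hae1, hae2, hco1, hco2, hf] with x H1 H2 Hc1 Hc2 Hf
  have hxz : ((x:ℂ) - z) ≠ 0 := by
    intro h
    apply hz
    have : ((x:ℂ) - z).im = 0 := by rw [h]; simp
    simpa using this
  have L1 : Tendsto (fun i => Pev (q (ns (ms i))) x) atTop (𝓝 (g x)) := by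
    have h' : Tendsto (fun i => (PL hmom (q (ns i)) : ℝ → ℂ) x) atTop (𝓝 (g x)) := H1
    have h'' := h'.comp hms.tendsto_atTop
    have : (fun i => (PL hmom (q (ns (ms i))) : ℝ → ℂ) x)
        = fun i => Pev (q (ns (ms i))) x := funext fun i => Hc1 _
    rwa [← this]
  have L2 : Tendsto (fun i => ((x:ℂ) - z) * Pev (q (ns (ms i))) x) atTop (𝓝 (F x)) := by
    have h'' : Tendsto (fun i => (PL hmom ((X - C z) * q (ns (ms i))) : ℝ → ℂ) x) atTop
        (𝓝 (f x)) := H2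
    have heqf : (fun i => (PL hmom ((X - C z) * q (ns (ms i))) : ℝ → ℂ) x)
        = fun i => ((x:ℂ) - z) * Pev (q (ns (ms i))) x := by
      funext i
      rw [Hc2]
      simp [Pev]
    rw [heqf, Hf] at h''
    exact h''
  have L2' : Tendsto (fun i => ((x:ℂ) - z) * Pev (q (ns (ms i))) x) atTop
      (𝓝 (((x:ℂ) - z) * (g x))) := L1.const_mul _
  have hkey : ((x:ℂ) - z) * g x = F x := tendsto_nhds_unique L2' L2
  rw [← hkey]
  field_simp

include heq in
lemma sim_step
    (hT : ∀ z : ℂ, z.im ≠ 0 → ∀ f : Lp ℂ 2 ν₁,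
      f ∈ closure (Set.range (fun q : ℂ[X] => PL hmom₁ ((X - C z) * q))))
    (z : ℂ) (hz : z.im ≠ 0) {F : ℝ → ℂ} (hF : Sim hmom₁ hmom₂ F) :
    Sim hmom₁ hmom₂ (fun x : ℝ => ((x:ℂ) - z)⁻¹ * F x) := by
  obtain ⟨h₁, h₂, pk, hp1, hp2⟩ := hF
  set f₁ := h₁.toLp F with hf₁
  set f₂ := h₂.toLp F with hf₂
  obtain ⟨a, ha_mem, ha_lim⟩ := mem_closure_iff_seq_limit.mp (hT z hz f₁)
  choose q hq using ha_mem
  replace ha_lim : Tendsto (fun k => PL hmom₁ ((X - C z) * q k)) atTop (𝓝 f₁) := by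
    have : (fun k => PL hmom₁ ((X - C z) * q k)) = a := funext fun k => hq k
    rw [this]; exact ha_lim
  have hdist : ∀ p r : ℂ[X], dist (PL hmom₁ p) (PL hmom₁ r) = dist (PL hmom₂ p) (PL hmom₂ r) := by
    intro p r
    rw [dist_eq_norm, dist_eq_norm, ← PL_sub, ← PL_sub, norm_PL_eq hmom₁ hmom₂ heq]
  -- convergence in the second space
  have hB : Tendsto (fun k => PL hmom₂ ((X - C z) * q k)) atTop (𝓝 f₂) := by
    rw [Metric.tendsto_atTop]
    intro ε hε
    obtain ⟨L1, hL1⟩ := Metric.tendsto_atTop.mp hp1 (ε/3) (by positivity)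
    obtain ⟨L2, hL2⟩ := Metric.tendsto_atTop.mp hp2 (ε/3) (by positivity)
    set l := max L1 L2 with hl
    have e1 : dist (PL hmom₁ (pk l)) f₁ < ε/3 := hL1 l (le_max_left _ _)
    have e2 : dist (PL hmom₂ (pk l)) f₂ < ε/3 := hL2 l (le_max_right _ _)
    obtain ⟨N, hN⟩ := Metric.tendsto_atTop.mp ha_lim (ε/3) (by positivity)
    refine ⟨N, fun k hk => ?_⟩
    have hNk := hN k hk
    calc dist (PL hmom₂ ((X - C z) * q k)) f₂
        ≤ dist (PL hmom₂ ((X - C z) * q k)) (PL hmom₂ (pk l)) + dist (PL hmom₂ (pk l)) f₂ :=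
          dist_triangle _ _ _
      _ = dist (PL hmom₁ ((X - C z) * q k)) (PL hmom₁ (pk l)) + dist (PL hmom₂ (pk l)) f₂ := by
          rw [hdist]
      _ ≤ (dist (PL hmom₁ ((X - C z) * q k)) f₁ + dist f₁ (PL hmom₁ (pk l)))
            + dist (PL hmom₂ (pk l)) f₂ := by
          have := dist_triangle (PL hmom₁ ((X - C z) * q k)) f₁ (PL hmom₁ (pk l))
          linarith
      _ < ε/3 + ε/3 + ε/3 := by
          rw [dist_comm f₁]
          have h3 : dist (PL hmom₁ ((X - C z) * q k)) f₁ < ε/3 := hNk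
          linarith
      _ = ε := by ring
  -- Cauchy sequences of the polynomials themselves
  have him : (0:ℝ) < |z.im| := abs_pos.mpr hz
  have hcau1 : CauchySeq (fun k => PL hmom₁ (q k)) := by
    have hAc := ha_lim.cauchySeq
    rw [Metric.cauchySeq_iff] at hAc ⊢
    intro ε hε
    obtain ⟨N, hN⟩ := hAc (|z.im| * ε) (by positivity)
    refine ⟨N, fun m hm n hn => ?_⟩
    have h1 := hN m hm n hn
    have h2 : dist (PL hmom₁ (q m)) (PL hmom₁ (q n)) ≤
        |z.im|⁻¹ * dist (PL hmom₁ ((X - C z) * q m)) (PL hmom₁ ((X - C z) * q n)) := by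
      rw [dist_eq_norm, ← PL_sub, dist_eq_norm, ← PL_sub, ← mul_sub]
      exact norm_PL_le hmom₁ z hz _
    have h3 : |z.im|⁻¹ * dist (PL hmom₁ ((X - C z) * q m)) (PL hmom₁ ((X - C z) * q n))
        < |z.im|⁻¹ * (|z.im| * ε) := by
      apply mul_lt_mul_of_pos_left h1 (by positivity)
    calc dist (PL hmom₁ (q m)) (PL hmom₁ (q n)) ≤ _ := h2
      _ < |z.im|⁻¹ * (|z.im| * ε) := h3
      _ = ε := by field_simp
  have hcau2 : CauchySeq (fun k => PL hmom₂ (q k)) := by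
    rw [Metric.cauchySeq_iff] at hcau1 ⊢
    intro ε hε
    obtain ⟨N, hN⟩ := hcau1 ε hε
    exact ⟨N, fun m hm n hn => by rw [← hdist]; exact hN m hm n hn⟩
  obtain ⟨g₁, hg₁⟩ := cauchySeq_tendsto_of_complete hcau1
  obtain ⟨g₂, hg₂⟩ := cauchySeq_tendsto_of_complete hcau2
  have key₁ : ⇑g₁ =ᵐ[ν₁] fun x : ℝ => ((x:ℂ) - z)⁻¹ * F x :=
    identify hmom₁ z hz q g₁ f₁ (MemLp.coeFn_toLp h₁) ha_lim hg₁
  have key₂ : ⇑g₂ =ᵐ[ν₂] fun x : ℝ => ((x:ℂ) - z)⁻¹ * F x :=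
    identify hmom₂ z hz q g₂ f₂ (MemLp.coeFn_toLp h₂) hB hg₂
  have hG₁ : MemLp (fun x : ℝ => ((x:ℂ) - z)⁻¹ * F x) 2 ν₁ := (Lp.memLp g₁).ae_eq key₁
  have hG₂ : MemLp (fun x : ℝ => ((x:ℂ) - z)⁻¹ * F x) 2 ν₂ := (Lp.memLp g₂).ae_eq key₂
  refine ⟨hG₁, hG₂, q, ?_, ?_⟩
  · have : hG₁.toLp _ = g₁ := by
      rw [MemLp.toLp_congr hG₁ (Lp.memLp g₁) key₁.symm, Lp.toLp_coeFn]
    rw [this]; exact hg₁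
  · have : hG₂.toLp _ = g₂ := by
      rw [MemLp.toLp_congr hG₂ (Lp.memLp g₂) key₂.symm, Lp.toLp_coeFn]
    rw [this]; exact hg₂

-- resolvent monomials
def W (m n : ℕ) : ℝ → ℂ :=
  fun x => (((x:ℂ) - Complex.I)⁻¹) ^ m * (((x:ℂ) + Complex.I)⁻¹) ^ n

include heq in
lemma sim_W
    (hT : ∀ z : ℂ, z.im ≠ 0 → ∀ f : Lp ℂ 2 ν₁,
      f ∈ closure (Set.range (fun q : ℂ[X] => PL hmom₁ ((X - C z) * q))))
    (m n : ℕ) : Sim hmom₁ hmom₂ (W m n) := by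
  induction m with
  | zero =>
    induction n with
    | zero =>
      have h := sim_pev hmom₁ hmom₂ (1 : ℂ[X])
      have : Pev (1 : ℂ[X]) = W 0 0 := funext fun x => by simp [Pev, W]
      rwa [this] at h
    | succ n ih =>
      have h := sim_step hmom₁ hmom₂ heq hT (-Complex.I) (by simp) ih
      have : (fun x : ℝ => ((x:ℂ) - (-Complex.I))⁻¹ * W 0 n x) = W 0 (n+1) :=
        funext fun x => by
          simp only [W, sub_neg_eq_add, pow_zero, one_mul, pow_succ]
          ring
      rwa [this] at h
  | succ m ih =>
    have h := sim_step hmom₁ hmom₂ heq hT Complex.I (by simp) ih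
    have : (fun x : ℝ => ((x:ℂ) - Complex.I)⁻¹ * W m n x) = W (m+1) n :=
      funext fun x => by
        simp only [W, pow_succ]
        ring
    rwa [this] at h

end Sim
def uu : ℝ → ℂ := fun x => ((x:ℂ) - Complex.I)⁻¹

lemma sub_I_ne_zero (x : ℝ) : ((x:ℂ) - Complex.I) ≠ 0 := by
  intro h
  have him := congrArg Complex.im h
  simp [Complex.sub_im] at him

lemma uu_cont : Continuous uu := by
  apply Continuous.inv₀
  · exact Complex.continuous_ofReal.sub continuous_const
  · exact sub_I_ne_zero

lemma uu_inj : Function.Injective uu := by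
  intro a b h
  have h2 : ((a:ℂ) - Complex.I) = ((b:ℂ) - Complex.I) := inv_injective h
  have := sub_left_inj.mp h2
  exact_mod_cast this

lemma uu_norm (x : ℝ) : ‖uu x‖ ≤ 1 := by
  rw [uu, norm_inv]
  have h := abs_im_le_sub Complex.I x
  simp only [Complex.I_im] at h
  rw [abs_one] at h
  exact inv_le_one_of_one_le₀ h

lemma uu_conj (x : ℝ) : conj (uu x) = ((x:ℂ) + Complex.I)⁻¹ := by
  rw [uu, map_inv₀, map_sub, Complex.conj_ofReal, Complex.conj_I, sub_neg_eq_add]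

lemma isFiniteMeasure_of_mom {ν : Measure ℝ}
    (hmom : ∀ n : ℕ, Integrable (fun x : ℝ => x ^ n) ν) : IsFiniteMeasure ν := by
  have h0 := hmom 0
  simp only [pow_zero] at h0
  rcases integrable_const_iff.mp h0 with h | h
  · exact absurd h one_ne_zero
  · exact h

theorem measure_eq_of_W {ν₁ ν₂ : Measure ℝ}
    (hmom₁ : ∀ n : ℕ, Integrable (fun x : ℝ => x ^ n) ν₁)
    (hmom₂ : ∀ n : ℕ, Integrable (fun x : ℝ => x ^ n) ν₂)
    (hW : ∀ m n : ℕ, ∫ x, W m n x ∂ν₁ = ∫ x, W m n x ∂ν₂) : ν₁ = ν₂ := by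
  haveI hfin₁ : IsFiniteMeasure ν₁ := isFiniteMeasure_of_mom hmom₁
  haveI hfin₂ : IsFiniteMeasure ν₂ := isFiniteMeasure_of_mom hmom₂
  set K : Set ℂ := Metric.closedBall 0 1 with hK
  haveI : CompactSpace K := isCompact_iff_compactSpace.mp (isCompact_closedBall _ _)
  have hmem : ∀ x : ℝ, uu x ∈ K := by
    intro x; rw [hK, Metric.mem_closedBall, dist_zero_right]; exact uu_norm x
  set π : ℝ → K := fun x => ⟨uu x, hmem x⟩ with hπ
  have hπc : Continuous π := Continuous.subtype_mk uu_cont _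
  have hint : ∀ (ν : Measure ℝ), IsFiniteMeasure ν → ∀ (g : C(K, ℂ)),
      Integrable (fun x => g (π x)) ν := by
    intro ν hν g
    have : (fun x => g (π x))
        = ⇑((BoundedContinuousFunction.mkOfCompact g).compContinuous ⟨π, hπc⟩) := rfl
    rw [this]
    exact BoundedContinuousFunction.integrable _ _
  have hlip : ∀ (ν : Measure ℝ), IsFiniteMeasure ν →
      Continuous (fun g : C(K,ℂ) => ∫ x, g (π x) ∂ν) := by
    intro ν hν
    apply LipschitzWith.continuous (K := (ν Set.univ).toReal.toNNReal)
    apply LipschitzWith.of_dist_le_mul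
    intro g h
    rw [dist_eq_norm, ← integral_sub (hint ν hν g) (hint ν hν h)]
    have hbd : ∀ x : ℝ, ‖g (π x) - h (π x)‖ ≤ dist g h := by
      intro x
      have := ContinuousMap.norm_coe_le_norm (g - h) (π x)
      simpa [dist_eq_norm] using this
    calc ‖∫ x, (g (π x) - h (π x)) ∂ν‖
        ≤ dist g h * (ν Set.univ).toReal :=
          norm_integral_le_of_norm_le_const (Eventually.of_forall hbd)
      _ ≤ (ν Set.univ).toReal.toNNReal * dist g h := by
          rw [Real.coe_toNNReal _ ENNReal.toReal_nonneg, mul_comm]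
  set Z : Set C(K, ℂ) := {g | ∫ x, g (π x) ∂ν₁ = ∫ x, g (π x) ∂ν₂} with hZ
  have hZclosed : IsClosed Z := isClosed_eq (hlip ν₁ hfin₁) (hlip ν₂ hfin₂)
  set w : ℕ × ℕ → C(K, ℂ) := fun mn =>
    ⟨fun zk => (zk:ℂ)^mn.1 * (conj (zk:ℂ))^mn.2,
      ((continuous_subtype_val.pow _).mul
        ((Complex.continuous_conj.comp continuous_subtype_val).pow _))⟩ with hw
  have hwZ : ∀ mn : ℕ × ℕ, w mn ∈ Z := by
    rintro ⟨m, n⟩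
    show ∫ x, (w (m,n)) (π x) ∂ν₁ = ∫ x, (w (m,n)) (π x) ∂ν₂
    have hpt : ∀ x : ℝ, (w (m,n)) (π x) = W m n x := by
      intro x
      show (uu x)^m * (conj (uu x))^n = W m n x
      rw [uu_conj, uu, W]
    simp_rw [hpt]
    exact hW m n
  set M : Submodule ℂ C(K, ℂ) := Submodule.span ℂ (Set.range w) with hM
  have hone : (1 : C(K,ℂ)) ∈ M := by
    apply Submodule.subset_span
    exact ⟨(0,0), by ext zk; simp [hw]⟩
  have hmul : ∀ x y : C(K,ℂ), x ∈ M → y ∈ M → x * y ∈ M := by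
    have hss : (Set.range w) * (Set.range w) ⊆ (M : Set C(K,ℂ)) := by
      rintro a ha
      rw [Set.mem_mul] at ha
      obtain ⟨x, ⟨mn, rfl⟩, y, ⟨mn', rfl⟩, rfl⟩ := ha
      apply Submodule.subset_span
      refine ⟨(mn.1 + mn'.1, mn.2 + mn'.2), ?_⟩
      ext zk
      simp [hw, pow_add]
      ring
    intro x y hx hy
    have hxy := Submodule.mul_mem_mul hx hy
    rw [hM, Submodule.span_mul_span] at hxy
    exact Submodule.span_le.mpr hss hxy
  have hstar : ∀ x : C(K,ℂ), x ∈ M → star x ∈ M := by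
    intro x hx
    induction hx using Submodule.span_induction with
    | mem g hg =>
      obtain ⟨⟨m,n⟩, rfl⟩ := hg
      apply Submodule.subset_span
      refine ⟨(n, m), ?_⟩
      ext zk
      simp [hw, star_mul', star_pow, RCLike.star_def]
      ring
    | zero => simpa using M.zero_mem
    | add a b _ _ ha hb => rw [star_add]; exact M.add_mem ha hb
    | smul c a _ ha => rw [star_smul]; exact M.smul_mem _ ha
  set MS : StarSubalgebra ℂ C(K, ℂ) :=
    { M.toSubalgebra hone hmul with star_mem' := fun {a} ha => hstar a ha } with hMS
  have hsep : MS.SeparatesPoints := by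
    intro z z' hzz
    refine ⟨_, ⟨w (1, 0), Submodule.subset_span ⟨(1,0), rfl⟩, rfl⟩, ?_⟩
    show ((z:ℂ)^1 * (conj (z:ℂ))^0) ≠ ((z':ℂ)^1 * conj (z':ℂ)^0)
    simpa using Subtype.coe_injective.ne hzz
  have htop := ContinuousMap.starSubalgebra_topologicalClosure_eq_top_of_separatesPoints MS hsep
  -- Z is a closed submodule containing M
  have hMZ : (M : Set C(K,ℂ)) ⊆ Z := by
    have : M ≤
      ({ carrier := Z
         add_mem' := by
           intro a b ha hb
           show ∫ x, (a + b) (π x) ∂ν₁ = ∫ x, (a + b) (π x) ∂ν₂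
           simp only [ContinuousMap.add_apply]
           rw [integral_add (hint ν₁ hfin₁ a) (hint ν₁ hfin₁ b),
             integral_add (hint ν₂ hfin₂ a) (hint ν₂ hfin₂ b)]
           exact congrArg₂ (· + ·) ha hb
         zero_mem' := by
           show ∫ x, (0 : C(K,ℂ)) (π x) ∂ν₁ = ∫ x, (0 : C(K,ℂ)) (π x) ∂ν₂
           simp
         smul_mem' := by
           intro c a ha
           show ∫ x, (c • a) (π x) ∂ν₁ = ∫ x, (c • a) (π x) ∂ν₂
           simp only [ContinuousMap.smul_apply]
           rw [integral_smul, integral_smul]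
           exact congrArg (c • ·) ha } : Submodule ℂ C(K,ℂ)) := by
      rw [hM]
      exact Submodule.span_le.mpr (fun g hg => by obtain ⟨mn, rfl⟩ := hg; exact hwZ mn)
    exact fun g hg => this hg
  have hZall : ∀ g : C(K, ℂ), g ∈ Z := by
    intro g
    have hg : g ∈ MS.topologicalClosure := by rw [htop]; trivial
    have hg' : g ∈ closure (MS : Set C(K,ℂ)) := hg
    have : closure (MS : Set C(K,ℂ)) ⊆ Z := by
      rw [← hZclosed.closure_eq]
      apply closure_mono
      exact hMZ
    exact this hg'
  -- conclude via pushforward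
  have hemb : MeasurableEmbedding uu := uu_cont.measurableEmbedding uu_inj
  have humeas : Measurable uu := uu_cont.measurable
  have hmap : ν₁.map uu = ν₂.map uu := by
    haveI : IsFiniteMeasure (ν₁.map uu) := by
      constructor
      rw [Measure.map_apply humeas MeasurableSet.univ]
      exact measure_lt_top _ _
    apply ext_of_forall_lintegral_eq_of_IsFiniteMeasure
    intro f
    rw [lintegral_map (by fun_prop) humeas, lintegral_map (by fun_prop) humeas]
    set g : C(K, ℂ) := ⟨fun zk => ((f (zk:ℂ) : ℝ) : ℂ),
      Complex.continuous_ofReal.comp (NNReal.continuous_coe.comp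
        (f.continuous.comp continuous_subtype_val))⟩ with hg
    have hZg : ∫ x, g (π x) ∂ν₁ = ∫ x, g (π x) ∂ν₂ := hZall g
    have hio : ∀ ν : Measure ℝ, ∫ x, g (π x) ∂ν = ((∫ x, (f (uu x) : ℝ) ∂ν : ℝ) : ℂ) := by
      intro ν
      exact integral_ofReal
    rw [hio ν₁, hio ν₂] at hZg
    have hre : ∫ x, (f (uu x) : ℝ) ∂ν₁ = ∫ x, (f (uu x) : ℝ) ∂ν₂ := by
      exact_mod_cast hZg
    have hint1 : Integrable (fun x => (f (uu x) : ℝ)) ν₁ := by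
      have := (hint ν₁ hfin₁ g).re
      simpa [hg] using this
    have hint2 : Integrable (fun x => (f (uu x) : ℝ)) ν₂ := by
      have := (hint ν₂ hfin₂ g).re
      simpa [hg] using this
    rw [lintegral_coe_eq_integral _ hint1, lintegral_coe_eq_integral _ hint2, hre]
  ext s hs
  have h1 : ν₁ s = (ν₁.map uu) (uu '' s) := by
    rw [hemb.map_apply, Set.preimage_image_eq s uu_inj]
  rw [h1, hmap, hemb.map_apply, Set.preimage_image_eq s uu_inj]

end Stmt5
end

open MeasureTheory Polynomial

/-- Uniqueness of the representing measure (Sections 4.2 and 7.2 of the paper): if two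
Borel measures on `ℝ` have the same (finite) moments, polynomials are dense in `L²(ν₁)`,
and the multiplication-by-`x` operator `T` with domain the polynomial classes in `L²(ν₁)`
is essentially self-adjoint (its closure equals its adjoint), then the measures coincide. -/
theorem stmt5 (ν₁ ν₂ : Measure ℝ)
    (hmom₁ : ∀ n : ℕ, Integrable (fun x : ℝ => x ^ n) ν₁)
    (hmom₂ : ∀ n : ℕ, Integrable (fun x : ℝ => x ^ n) ν₂)
    (heq : ∀ n : ℕ, ∫ x, x ^ n ∂ν₁ = ∫ x, x ^ n ∂ν₂)
    (hdense : Dense {g : Lp ℂ 2 ν₁ |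
      ∃ p : Polynomial ℂ, (g : ℝ → ℂ) =ᵐ[ν₁] fun x : ℝ => p.eval (x : ℂ)})
    (T : Lp ℂ 2 ν₁ →ₗ.[ℂ] Lp ℂ 2 ν₁)
    (hdom : ∀ g : Lp ℂ 2 ν₁, g ∈ T.domain ↔
      ∃ p : Polynomial ℂ, (g : ℝ → ℂ) =ᵐ[ν₁] fun x : ℝ => p.eval (x : ℂ))
    (hdd : Dense (T.domain : Set (Lp ℂ 2 ν₁)))
    (haction : ∀ (g : T.domain) (p : Polynomial ℂ),
      ((g : Lp ℂ 2 ν₁) : ℝ → ℂ) =ᵐ[ν₁] (fun x : ℝ => p.eval (x : ℂ)) →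
      (T g : ℝ → ℂ) =ᵐ[ν₁] fun x : ℝ => (x : ℂ) * p.eval (x : ℂ))
    (hsymm : ∀ f g : T.domain,
      inner (𝕜 := ℂ) (T f) ((g : Lp ℂ 2 ν₁)) = inner (𝕜 := ℂ) ((f : Lp ℂ 2 ν₁)) (T g))
    (hesa : T.closure = T.adjoint) :
    ν₁ = ν₂ := by
  have hT : ∀ z : ℂ, z.im ≠ 0 → ∀ f : Lp ℂ 2 ν₁,
      f ∈ closure (Set.range (fun q : Polynomial ℂ => Stmt5.PL hmom₁ ((X - C z) * q))) :=
    fun z hz f => Stmt5.mem_closure_range_sub hmom₁ T hdom hdd haction hsymm hesa z hz f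
  apply Stmt5.measure_eq_of_W hmom₁ hmom₂
  intro m n
  exact Stmt5.sim_integral hmom₁ hmom₂ heq (Stmt5.sim_W hmom₁ hmom₂ heq hT m n)
end

section
/- Let K be a complex Hilbert space and T a densely defined symmetric operator in K with domain D. Let ι be a nonempty index type, a : ι → ℝ a family of real numbers, and λ a nonzero real number. In the Hilbert space H = ℓ²(ι, K) (the lp space with p = 2 of the constant family of copies of K), let A be the operator with domain consisting of all finitely supported families x with x_i ∈ D for every i, defined by (A x)_i = a_i · x_i + λ · T(x_i). Then A is densely defined and symmetric, and A is essentially self-adjoint (its closure equals its adjoint) if and only if T is essentially self-adjoint. -/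
open scoped LinearPMap ComplexConjugate

noncomputable section

variable {E : Type*} [NormedAddCommGroup E] [InnerProductSpace ℂ E] [CompleteSpace E]

local notation "⟪" x ", " y "⟫" => @inner ℂ _ _ x y

namespace Stmt8Aux

theorem adjoint_graph_eq (S : E →ₗ.[ℂ] E) (hS : Dense (S.domain : Set E)) :
    (S†.graph : Set (E × E)) =
      ⋂ x : S.domain, {p : E × E | ⟪p.2, (x : E)⟫ = ⟪p.1, S x⟫} := by
  ext p
  simp only [Set.mem_iInter, Set.mem_setOf_eq, SetLike.mem_coe, LinearPMap.mem_graph_iff]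
  constructor
  · rintro ⟨y, hy1, hy2⟩ x
    rw [← hy1, ← hy2]
    exact LinearPMap.adjoint_isFormalAdjoint hS y x
  · intro h
    have hmem : p.1 ∈ S†.domain :=
      LinearPMap.mem_adjoint_domain_of_exists _ ⟨p.2, h⟩
    exact ⟨⟨p.1, hmem⟩, rfl, LinearPMap.adjoint_apply_eq hS _ h⟩

theorem adjoint_isClosed (S : E →ₗ.[ℂ] E) (hS : Dense (S.domain : Set E)) :
    S†.IsClosed := by
  rw [LinearPMap.IsClosed, adjoint_graph_eq S hS]
  exact isClosed_iInter fun x =>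
    isClosed_eq ((continuous_snd.inner continuous_const))
      ((continuous_fst.inner continuous_const))

end Stmt8Aux

namespace Stmt8Aux

theorem isClosable_of_symm (S : E →ₗ.[ℂ] E) (hS : Dense (S.domain : Set E))
    (hsymm : ∀ x y : S.domain, ⟪S x, (y : E)⟫ = ⟪(x : E), S y⟫) :
    S.IsClosable ∧ S.closure ≤ S† := by
  have hfa : S.IsFormalAdjoint S := hsymm
  have hle : S ≤ S† := LinearPMap.IsFormalAdjoint.le_adjoint hS hfa
  have hclosed := adjoint_isClosed S hS
  have hclosable : S.IsClosable := hclosed.isClosable.leIsClosable hle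
  refine ⟨hclosable, LinearPMap.le_of_le_graph ?_⟩
  rw [← hclosable.graph_closure_eq_closure_graph]
  exact (S.graph).topologicalClosure_minimal (LinearPMap.le_graph_of_le hle) hclosed

theorem closure_inner_eq (S : E →ₗ.[ℂ] E) (hclosable : S.IsClosable) {w z : E}
    (h : ∀ x : S.domain, ⟪w, (x : E)⟫ = ⟪z, S x⟫) :
    ∀ x : S.closure.domain, ⟪w, (x : E)⟫ = ⟪z, S.closure x⟫ := by
  have hsub : (S.graph : Set (E × E)) ⊆ {p : E × E | ⟪w, p.1⟫ = ⟪z, p.2⟫} := by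
    rintro p hp
    rw [SetLike.mem_coe, LinearPMap.mem_graph_iff] at hp
    obtain ⟨y, hy1, hy2⟩ := hp
    simp only [Set.mem_setOf_eq, ← hy1, ← hy2]
    exact h y
  have hC : IsClosed {p : E × E | ⟪w, p.1⟫ = ⟪z, p.2⟫} :=
    isClosed_eq (continuous_const.inner continuous_fst)
      (continuous_const.inner continuous_snd)
  have hcl : (S.closure.graph : Set (E × E)) ⊆ {p : E × E | ⟪w, p.1⟫ = ⟪z, p.2⟫} := by
    rw [← hclosable.graph_closure_eq_closure_graph, Submodule.topologicalClosure_coe]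
    exact closure_minimal hsub hC
  intro x
  exact hcl (S.closure.mem_graph x)

end Stmt8Aux

namespace Stmt8Aux

theorem adjoint_le_closure (S : E →ₗ.[ℂ] E) (hS : Dense (S.domain : Set E))
    (hsymm : ∀ x y : S.domain, ⟪S x, (y : E)⟫ = ⟪(x : E), S y⟫)
    (hadj : ∀ u v : S†.domain, ⟪S† u, (v : E)⟫ = ⟪(u : E), S† v⟫) :
    S† ≤ S.closure := by
  obtain ⟨hclosable, -⟩ := isClosable_of_symm S hS hsymm
  apply LinearPMap.le_of_le_graph
  intro p hp
  rw [LinearPMap.mem_graph_iff] at hp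
  obtain ⟨y, hy1, hy2⟩ := hp
  -- work in the Hilbert space `WithLp 2 (E × E)`
  set e : WithLp 2 (E × E) ≃L[ℂ] E × E := WithLp.prodContinuousLinearEquiv 2 ℂ E E with he
  set G₂ : Submodule ℂ (WithLp 2 (E × E)) :=
    S.graph.comap ((e.toLinearEquiv : WithLp 2 (E × E) ≃ₗ[ℂ] E × E) :
      WithLp 2 (E × E) →ₗ[ℂ] E × E) with hG₂
  set q : WithLp 2 (E × E) := (WithLp.equiv 2 (E × E)).symm ((y : E), S† y) with hq
  have hqmem : q ∈ G₂ᗮᗮ := by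
    rw [Submodule.mem_orthogonal]
    intro u hu
    rw [Submodule.mem_orthogonal] at hu
    -- `u = (u₁, u₂)` with `⟪x, u₁⟫ + ⟪S x, u₂⟫ = 0` for all `x ∈ S.domain`
    have hu' : ∀ x : S.domain, ⟪(x : E), u.fst⟫ + ⟪S x, u.snd⟫ = 0 := by
      intro x
      have hmem : (WithLp.equiv 2 (E × E)).symm ((x : E), S x) ∈ G₂ := by
        simp only [hG₂, Submodule.mem_comap]
        exact S.mem_graph x
      have := hu _ hmem
      rwa [WithLp.prod_inner_apply] at this
    have hu'' : ∀ x : S.domain, ⟪-u.fst, (x : E)⟫ = ⟪u.snd, S x⟫ := by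
      intro x
      have := congrArg (starRingEnd ℂ) (hu' x)
      simp only [map_add, inner_conj_symm, map_zero] at this
      rw [inner_neg_left]
      linear_combination -this
    have hmem2 : u.snd ∈ S†.domain :=
      LinearPMap.mem_adjoint_domain_of_exists _ ⟨-u.fst, hu''⟩
    have happ : S† ⟨u.snd, hmem2⟩ = -u.fst :=
      LinearPMap.adjoint_apply_eq hS _ hu''
    rw [WithLp.prod_inner_apply]
    have hfst : q.fst = (y : E) := rfl
    have hsnd : q.snd = S† y := rfl
    change ⟪u.fst, q.fst⟫ + ⟪u.snd, q.snd⟫ = 0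
    rw [hfst, hsnd]
    have hufst : u.fst = -(S† ⟨u.snd, hmem2⟩) := by rw [happ]; rw [neg_neg]
    rw [hufst, inner_neg_left]
    rw [hadj ⟨u.snd, hmem2⟩ y]
    ring
  rw [Submodule.orthogonal_orthogonal_eq_closure] at hqmem
  -- transport back through the homeomorphism `e`
  have hq2 : ((y : E), S† y) ∈ closure (S.graph : Set (E × E)) := by
    have h1 : q ∈ closure (G₂ : Set (WithLp 2 (E × E))) := by
      rwa [← Submodule.topologicalClosure_coe]
    have h2 : e q ∈ closure (e '' (G₂ : Set (WithLp 2 (E × E)))) :=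
      (image_closure_subset_closure_image e.continuous) ⟨q, h1, rfl⟩
    have h3 : e '' (G₂ : Set (WithLp 2 (E × E))) = (S.graph : Set (E × E)) := by
      rw [hG₂]
      ext p
      constructor
      · rintro ⟨r, hr, rfl⟩
        exact hr
      · intro hp
        exact ⟨e.symm p, by simpa using hp, by simp⟩
      
    have h4 : e q = ((y : E), S† y) := rfl
    rwa [h3, h4] at h2
  have h5 : ((y : E), S† y) ∈ S.closure.graph := by
    rw [← hclosable.graph_closure_eq_closure_graph]
    rw [← Submodule.topologicalClosure_coe] at hq2
    exact hq2
  have hp : p = ((y : E), S† y) := Prod.ext hy1.symm hy2.symm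
  rw [hp]
  exact h5

end Stmt8Aux

namespace Stmt8Aux

theorem esa_iff_adjoint_symm (S : E →ₗ.[ℂ] E) (hS : Dense (S.domain : Set E))
    (hsymm : ∀ x y : S.domain, ⟪S x, (y : E)⟫ = ⟪(x : E), S y⟫) :
    S.closure = S† ↔ ∀ u v : S†.domain, ⟪S† u, (v : E)⟫ = ⟪(u : E), S† v⟫ := by
  obtain ⟨hclosable, hle⟩ := isClosable_of_symm S hS hsymm
  constructor
  · intro h u v
    have hext : ∀ x : S.closure.domain, ⟪(S† u : E), (x : E)⟫ = ⟪(u : E), S.closure x⟫ :=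
      closure_inner_eq S hclosable fun x => LinearPMap.adjoint_isFormalAdjoint hS u x
    rw [h] at hext
    exact hext v
  · intro hadj
    exact le_antisymm hle (adjoint_le_closure S hS hsymm hadj)

end Stmt8Aux

end

set_option maxHeartbeats 2000000 in
/-- Operator-theoretic content of Theorem 7.1 of the paper: in `ℓ²(ι, K)`, the direct-sum
operator `A` acting on finitely supported families with components in the domain of a
densely defined symmetric operator `T` by `(A x)_i = a_i • x_i + λ • T x_i` is densely
defined and symmetric, and it is essentially self-adjoint iff `T` is. -/
theorem stmt8 {K : Type*} [NormedAddCommGroup K] [InnerProductSpace ℂ K]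
    [CompleteSpace K] {ι : Type*} [Nonempty ι] (a : ι → ℝ) (lam : ℝ) (hlam : lam ≠ 0)
    (T : K →ₗ.[ℂ] K) (hTdd : Dense (T.domain : Set K))
    (hTsymm : ∀ x y : T.domain,
      inner (𝕜 := ℂ) (T x) ((y : K)) = inner (𝕜 := ℂ) ((x : K)) (T y))
    (A : lp (fun _ : ι => K) 2 →ₗ.[ℂ] lp (fun _ : ι => K) 2)
    (hAdom : ∀ x : lp (fun _ : ι => K) 2, x ∈ A.domain ↔
      ({i : ι | x i ≠ 0}.Finite ∧ ∀ i, x i ∈ T.domain))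
    (hAact : ∀ (x : A.domain)
      (hx : ∀ i, (x : lp (fun _ : ι => K) 2) i ∈ T.domain) (i : ι),
      (A x) i = (a i : ℂ) • (x : lp (fun _ : ι => K) 2) i
        + (lam : ℂ) • T ⟨(x : lp (fun _ : ι => K) 2) i, hx i⟩) :
    Dense (A.domain : Set (lp (fun _ : ι => K) 2)) ∧
    (∀ x y : A.domain,
      inner (𝕜 := ℂ) (A x) ((y : lp (fun _ : ι => K) 2))
        = inner (𝕜 := ℂ) ((x : lp (fun _ : ι => K) 2)) (A y)) ∧
    (A.closure = A.adjoint ↔ T.closure = T.adjoint) := by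
  classical
  -- density of the domain of `A`
  have hdense : Dense (A.domain : Set (lp (fun _ : ι => K) 2)) := by
    rw [Metric.dense_iff]
    intro f r hr
    have hsum := lp.hasSum_single (E := fun _ : ι => K) (p := 2) (by norm_num) f
    rw [HasSum, Metric.tendsto_nhds] at hsum
    obtain ⟨s, hs⟩ := (hsum (r / 2) (by linarith)).exists
    set ε := r / (2 * (s.card + 1)) with hε
    have hεpos : 0 < ε := by positivity
    have hchoice : ∀ i : ι, ∃ d : K, d ∈ T.domain ∧ ‖f i - d‖ < ε := by
      intro i
      obtain ⟨d, hd1, hd2⟩ := Metric.dense_iff.mp hTdd (f i) ε hεpos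
      exact ⟨d, hd2, by rwa [Metric.mem_ball, dist_comm, dist_eq_norm] at hd1⟩
    choose d hd1 hd2 using hchoice
    set g : lp (fun _ : ι => K) 2 := ∑ i ∈ s, lp.single 2 i (d i) with hg
    have hgapp : ∀ j, g j = if j ∈ s then d j else 0 := by
      intro j
      rw [hg]
      simp only [lp.coeFn_sum, Finset.sum_apply, lp.single_apply, Finset.sum_dite_eq, Finset.sum_pi_single]
    have hgmem : g ∈ A.domain := by
      rw [hAdom]
      constructor
      · refine Set.Finite.subset s.finite_toSet fun j hj => ?_
        simp only [Set.mem_setOf_eq, hgapp] at hj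
        by_contra h
        rw [if_neg (by simpa using h)] at hj
        exact hj rfl
      · intro j
        rw [hgapp]
        split
        · exact hd1 j
        · exact T.domain.zero_mem
    refine ⟨g, Metric.mem_ball.mpr ?_, hgmem⟩
    have h2 : dist g (∑ i ∈ s, lp.single 2 i (f i)) ≤ ∑ i ∈ s, ‖f i - d i‖ := by
      rw [dist_eq_norm, hg, ← Finset.sum_sub_distrib]
      have hsingle : ∀ i ∈ s, lp.single 2 i (d i) - lp.single 2 i (f i)
          = lp.single (E := fun _ : ι => K) 2 i ((fun j => d j - f j) i) := by
        intro i _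
        apply lp.ext
        funext j
        by_cases hji : j = i
        · subst hji
          simp [lp.single_apply_self]
        · simp [lp.single_apply_ne _ _ _ hji]
      rw [Finset.sum_congr rfl hsingle]
      refine (norm_sum_le _ _).trans ?_
      apply Finset.sum_le_sum
      intro i _
      refine (le_of_eq (lp.norm_single (E := fun _ : ι => K) (p := 2) (by norm_num) i ((fun j => d j - f j) i))).trans ?_
      rw [norm_sub_rev]
    have h3 : (∑ i ∈ s, ‖f i - d i‖) < r / 2 := by
      calc ∑ i ∈ s, ‖f i - d i‖ ≤ ∑ _i ∈ s, ε :=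
            Finset.sum_le_sum fun i _ => (hd2 i).le
        _ = s.card * ε := by rw [Finset.sum_const, nsmul_eq_mul]
        _ < r / 2 := by
            have h0 : (0:ℝ) ≤ (s.card : ℝ) := Nat.cast_nonneg _
            rw [hε, mul_div_assoc', div_lt_div_iff₀ (by positivity) (by norm_num)]
            nlinarith
    calc dist g f ≤ dist g (∑ i ∈ s, lp.single 2 i (f i))
          + dist (∑ i ∈ s, lp.single 2 i (f i)) f := dist_triangle _ _ _
      _ < r / 2 + r / 2 := add_lt_add_of_le_of_lt (h2.trans h3.le) hs
      _ = r := by ring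
  have hAsymm : ∀ x y : A.domain,
      inner (𝕜 := ℂ) (A x) ((y : lp (fun _ : ι => K) 2))
        = inner (𝕜 := ℂ) ((x : lp (fun _ : ι => K) 2)) (A y) := by
    intro x y
    have hx := ((hAdom (x : lp (fun _ : ι => K) 2)).mp x.2).2
    have hy := ((hAdom (y : lp (fun _ : ι => K) 2)).mp y.2).2
    rw [lp.inner_eq_tsum, lp.inner_eq_tsum]
    apply tsum_congr
    intro i
    rw [hAact x hx i, hAact y hy i]
    simp only [inner_add_left, inner_add_right, inner_smul_left, inner_smul_right,
      Complex.conj_ofReal]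
    rw [hTsymm ⟨(x : lp (fun _ : ι => K) 2) i, hx i⟩ ⟨(y : lp (fun _ : ι => K) 2) i, hy i⟩]
  refine ⟨hdense, hAsymm, ?_⟩
  have hformalA := LinearPMap.adjoint_isFormalAdjoint hdense
  have hformalT := LinearPMap.adjoint_isFormalAdjoint hTdd
  have hlamC : (lam : ℂ) ≠ 0 := Complex.ofReal_ne_zero.mpr hlam
  -- single elements of the domain of `A`
  have hsingle_mem : ∀ (i : ι) (u : K), u ∈ T.domain →
      lp.single (E := fun _ : ι => K) 2 i u ∈ A.domain := by
    intro i u hu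
    rw [hAdom]
    constructor
    · refine Set.Finite.subset (Set.finite_singleton i) fun j hj => ?_
      simp only [Set.mem_setOf_eq] at hj
      by_contra h
      rw [lp.single_apply_ne _ _ _ (by simpa using h)] at hj
      exact hj rfl
    · intro j
      by_cases hji : j = i
      · subst hji; rw [lp.single_apply_self]; exact hu
      · rw [lp.single_apply_ne _ _ _ hji]; exact T.domain.zero_mem
  -- the action of `A` on single elements
  have hAct_single : ∀ (i : ι) (u : K) (hu : u ∈ T.domain)
      (x : A.domain) (hx : (x : lp (fun _ : ι => K) 2) = lp.single 2 i u)
      (g : lp (fun _ : ι => K) 2),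
      inner (𝕜 := ℂ) g (A x) = inner (𝕜 := ℂ) (g i)
        ((a i : ℂ) • u + (lam : ℂ) • T ⟨u, hu⟩) := by
    intro i u hu x hx g
    have hxd := ((hAdom (x : lp (fun _ : ι => K) 2)).mp x.2).2
    rw [lp.inner_eq_tsum]
    rw [tsum_eq_single i ?_]
    · congr 1
      rw [hAact x hxd i]
      have h1 : (x : lp (fun _ : ι => K) 2) i = u := by rw [hx, lp.single_apply_self]
      congr 1
      · rw [h1]
      · congr 1
        apply congrArg
        exact Subtype.ext h1
    · intro j hji
      have h0 : (x : lp (fun _ : ι => K) 2) j = 0 := by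
        rw [hx, lp.single_apply_ne _ _ _ hji]
      rw [hAact x hxd j]
      have h2 : (⟨(x : lp (fun _ : ι => K) 2) j, hxd j⟩ : T.domain) = 0 := Subtype.ext h0
      rw [h2, h0]
      simp
  -- componentwise description of the adjoint of `A`
  have hF3 : ∀ (y : A†.domain) (i : ι),
      ∃ h : ((y : lp (fun _ : ι => K) 2)) i ∈ T†.domain,
      ((A† y : lp (fun _ : ι => K) 2)) i
        = (a i : ℂ) • ((y : lp (fun _ : ι => K) 2) i)
          + (lam : ℂ) • (T† ⟨(y : lp (fun _ : ι => K) 2) i, h⟩) := by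
    intro y i
    have key : ∀ dd : T.domain, inner (𝕜 := ℂ) ((A† y : lp (fun _ : ι => K) 2) i) ((dd : K))
        = inner (𝕜 := ℂ) ((y : lp (fun _ : ι => K) 2) i)
          ((a i : ℂ) • (dd : K) + (lam : ℂ) • T dd) := by
      intro dd
      set x : A.domain := ⟨lp.single 2 i (dd : K), hsingle_mem i dd dd.2⟩ with hxdef
      have h1 := hformalA y x
      have hx : (x : lp (fun _ : ι => K) 2) = lp.single 2 i (dd : K) := rfl
      rw [hx, lp.inner_single_right] at h1
      rw [h1, hAct_single i dd dd.2 x hx]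
    set w : K := (lam : ℂ)⁻¹ • (((A† y : lp (fun _ : ι => K) 2)) i
      - (a i : ℂ) • ((y : lp (fun _ : ι => K) 2) i)) with hw
    have hw2 : ∀ dd : T.domain, inner (𝕜 := ℂ) w ((dd : K))
        = inner (𝕜 := ℂ) ((y : lp (fun _ : ι => K) 2) i) (T dd) := by
      intro dd
      rw [hw, inner_smul_left, inner_sub_left, inner_smul_left, key dd, inner_add_right,
        inner_smul_right, inner_smul_right]
      simp only [map_inv₀, Complex.conj_ofReal]
      field_simp
      ring
    have hmem : ((y : lp (fun _ : ι => K) 2)) i ∈ T†.domain :=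
      LinearPMap.mem_adjoint_domain_of_exists _ ⟨w, hw2⟩
    have happ : T† ⟨((y : lp (fun _ : ι => K) 2)) i, hmem⟩ = w :=
      LinearPMap.adjoint_apply_eq hTdd _ hw2
    refine ⟨hmem, ?_⟩
    rw [happ, hw, smul_smul, mul_inv_cancel₀ hlamC, one_smul]
    abel

  -- single elements with component in the domain of `T†` belong to the domain of `A†`
  have hF4 : ∀ (i₀ : ι) (u : K) (hu : u ∈ T†.domain),
      ∃ hmem : lp.single (E := fun _ : ι => K) 2 i₀ u ∈ A†.domain,
        A† ⟨lp.single 2 i₀ u, hmem⟩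
          = lp.single 2 i₀ ((a i₀ : ℂ) • u + (lam : ℂ) • T† ⟨u, hu⟩) := by
    intro i₀ u hu
    set z := lp.single (E := fun _ : ι => K) 2 i₀
      ((a i₀ : ℂ) • u + (lam : ℂ) • T† ⟨u, hu⟩) with hz
    have key : ∀ x : A.domain, inner (𝕜 := ℂ) z ((x : lp (fun _ : ι => K) 2))
        = inner (𝕜 := ℂ) (lp.single 2 i₀ u) (A x) := by
      intro x
      have hxd := ((hAdom (x : lp (fun _ : ι => K) 2)).mp x.2).2
      rw [hz, lp.inner_single_left, lp.inner_single_left, hAact x hxd i₀]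
      simp only [inner_add_left, inner_add_right, inner_smul_left, inner_smul_right,
        Complex.conj_ofReal]
      rw [hformalT ⟨u, hu⟩ ⟨(x : lp (fun _ : ι => K) 2) i₀, hxd i₀⟩]
    have hmem : lp.single (E := fun _ : ι => K) 2 i₀ u ∈ A†.domain :=
      LinearPMap.mem_adjoint_domain_of_exists _ ⟨z, key⟩
    exact ⟨hmem, LinearPMap.adjoint_apply_eq hdense _ key⟩
  -- transfer of symmetry of the adjoints
  have hTofA : (∀ u v : A†.domain, inner (𝕜 := ℂ) (A† u) ((v : lp (fun _ : ι => K) 2))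
        = inner (𝕜 := ℂ) ((u : lp (fun _ : ι => K) 2)) (A† v)) →
      ∀ u v : T†.domain, inner (𝕜 := ℂ) (T† u) ((v : K))
        = inner (𝕜 := ℂ) ((u : K)) (T† v) := by
    intro hA u v
    have i₀ : ι := Classical.arbitrary ι
    obtain ⟨hyu, hyuval⟩ := hF4 i₀ (u : K) u.2
    obtain ⟨hyv, hyvval⟩ := hF4 i₀ (v : K) v.2
    have hsym := hA ⟨_, hyu⟩ ⟨_, hyv⟩
    have hcu : ((⟨lp.single 2 i₀ (u : K), hyu⟩ : A†.domain) : lp (fun _ : ι => K) 2)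
        = lp.single 2 i₀ (u : K) := rfl
    have hcv : ((⟨lp.single 2 i₀ (v : K), hyv⟩ : A†.domain) : lp (fun _ : ι => K) 2)
        = lp.single 2 i₀ (v : K) := rfl
    rw [hcu, hcv, hyuval, hyvval, lp.inner_single_left, lp.inner_single_left,
      lp.single_apply_self, lp.single_apply_self] at hsym
    simp only [inner_add_left, inner_add_right, inner_smul_left, inner_smul_right,
      Complex.conj_ofReal, Subtype.coe_eta] at hsym
    refine mul_left_cancel₀ hlamC ?_
    linear_combination hsym
  have hAofT : (∀ u v : T†.domain, inner (𝕜 := ℂ) (T† u) ((v : K))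
        = inner (𝕜 := ℂ) ((u : K)) (T† v)) →
      ∀ u v : A†.domain, inner (𝕜 := ℂ) (A† u) ((v : lp (fun _ : ι => K) 2))
        = inner (𝕜 := ℂ) ((u : lp (fun _ : ι => K) 2)) (A† v) := by
    intro hT y w
    rw [lp.inner_eq_tsum, lp.inner_eq_tsum]
    apply tsum_congr
    intro i
    obtain ⟨hyi, hyival⟩ := hF3 y i
    obtain ⟨hwi, hwival⟩ := hF3 w i
    rw [hyival, hwival]
    simp only [inner_add_left, inner_add_right, inner_smul_left, inner_smul_right,
      Complex.conj_ofReal]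
    rw [hT ⟨_, hyi⟩ ⟨_, hwi⟩]
  rw [Stmt8Aux.esa_iff_adjoint_symm A hdense hAsymm,
    Stmt8Aux.esa_iff_adjoint_symm T hTdd hTsymm]
  exact ⟨hTofA, hAofT⟩
end

section
/- Let G be an additive abelian group and K a complex Hilbert space, and let H = ℓ²(G, K) be the Hilbert space of square-summable K-valued families indexed by G. For a ∈ G let T_a : H → H be the translation unitary (T_a x)(g) = x(g − a). A character of G is a map χ : G → ℂ with |χ(g)| = 1 for all g and χ(g + g') = χ(g)·χ(g'); for a character χ let D_χ : H → H be the diagonal unitary (D_χ x)(g) = χ(g)·x(g). Let X be a set of characters of G that is closed under pointwise complex conjugation and separates points, i.e. for every g ≠ 0 there is χ ∈ X with χ(g) ≠ 1. Suppose V ⊆ H is a closed linear subspace with T_a(V) ⊆ V for every a ∈ G and D_χ(V) ⊆ V for every χ ∈ X. Then there exists a closed linear subspace K̃ ⊆ K such that V = {x ∈ H : x(g) ∈ K̃ for all g ∈ G}. -/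
open Finset in
theorem key_fourier {G : Type*} [AddCommGroup G] (M : Submonoid (G → ℂ))
    (hchar : ∀ w ∈ M, (∀ g : G, ‖w g‖ = 1) ∧ ∀ g g' : G, w (g + g') = w g * w g')
    (hsep : ∀ g : G, g ≠ 0 → ∃ w ∈ M, w g ≠ 1)
    (c : G → ℂ) (hc : Summable fun g => ‖c g‖)
    (hz : ∀ w ∈ M, ∑' g, w g * c g = 0) : ∀ g, c g = 0 := by
  have hchar0 : ∀ w ∈ M, w 0 = 1 := by
    intro w hw
    have h1 : ‖w 0‖ = 1 := (hchar w hw).1 0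
    have h2 : w (0 + 0) = w 0 * w 0 := (hchar w hw).2 0 0
    have hne : w 0 ≠ 0 := by intro h; rw [h] at h1; simp at h1
    rw [zero_add] at h2
    field_simp at h2
    exact h2.symm
  classical
  intro g₀
  -- it suffices to bound the norm by every positive ε
  have main : ∀ ε : ℝ, 0 < ε → ‖c g₀‖ ≤ ε := by
    intro ε hε
    -- tail bound
    obtain ⟨S₀, hS₀⟩ := Filter.eventually_atTop.1
      ((tendsto_order.1 (tendsto_tsum_compl_atTop_zero (fun g => ‖c g‖))).2 (ε/2) (by positivity))
    set S : Finset G := insert g₀ S₀ with hS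
    have hg₀S : g₀ ∈ S := Finset.mem_insert_self _ _
    have htail : ∑' g : {x : G // x ∉ S}, ‖c (g : G)‖ < ε / 2 :=
      hS₀ S (Finset.le_iff_subset.2 (Finset.subset_insert _ _))
    set T : Finset G := S.erase g₀ with hT
    -- choose separating characters
    have hχex : ∀ h : G, h ∈ T → ∃ w ∈ M, w (h - g₀) ≠ 1 := by
      intro h hh
      exact hsep _ (sub_ne_zero.2 (Finset.ne_of_mem_erase hh))
    set χ : G → (G → ℂ) := fun h =>
      if hh : ∃ w ∈ M, w (h - g₀) ≠ 1 then hh.choose else 1 with hχdef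
    have hχM : ∀ h, χ h ∈ M := by
      intro h
      by_cases hh : ∃ w ∈ M, w (h - g₀) ≠ 1
      · simp only [hχdef, dif_pos hh]; exact hh.choose_spec.1
      · simp only [hχdef, dif_neg hh]; exact one_mem M
    have hχne : ∀ h ∈ T, χ h (h - g₀) ≠ 1 := by
      intro h hh
      have hh' := hχex h hh
      simp only [hχdef, dif_pos hh']
      exact hh'.choose_spec.2
    -- averaging factors
    set F : ℕ → G → G → ℂ := fun N h g =>
      (N:ℂ)⁻¹ * ∑ n ∈ Finset.range N, (χ h (g - g₀))^n with hFdef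
    -- main cancellation: products of averaging factors still sum against c to zero
    have main0 : ∀ (N : ℕ) (T' : Finset G), ∀ w ∈ M,
        Summable (fun g => w g * (∏ h ∈ T', F N h g) * c g) ∧
        ∑' g, w g * (∏ h ∈ T', F N h g) * c g = 0 := by
      intro N T'
      induction T' using Finset.induction_on with
      | empty =>
        intro w hw
        have heq : (fun g => w g * (∏ h ∈ (∅ : Finset G), F N h g) * c g)
            = fun g => w g * c g := by
          funext g; simp
        constructor
        · rw [heq]
          refine Summable.of_norm ?_
          have : (fun g => ‖w g * c g‖) = fun g => ‖c g‖ := by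
            funext g; rw [norm_mul, (hchar w hw).1 g, one_mul]
          rw [this]; exact hc
        · rw [heq]; exact hz w hw
      | @insert a T' ha IH =>
        intro w hw
        have hprod : ∀ g : G, (∏ h ∈ insert a T', F N h g) = F N a g * ∏ h ∈ T', F N h g :=
          fun g => Finset.prod_insert ha
        have hne0 : χ a g₀ ≠ 0 := by
          intro h
          have h1 := (hchar _ (hχM a)).1 g₀
          rw [h] at h1; simp at h1
        have h1 : χ a (g₀ : G) ≠ 0 := hne0
        have hkey : ∀ g : G, w g * (∏ h ∈ insert a T', F N h g) * c g
            = ∑ n ∈ Finset.range N,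
              ((N:ℂ)⁻¹ * ((χ a g₀)^n)⁻¹) * ((w * (χ a)^n) g * (∏ h ∈ T', F N h g) * c g) := by
          intro g
          rw [hprod g]
          have hsub : χ a (g - g₀) = χ a g * (χ a g₀)⁻¹ := by
            have h2 := (hchar _ (hχM a)).2 (g - g₀) g₀
            rw [sub_add_cancel] at h2
            field_simp [h2]
            exact h2.symm
          simp only [hFdef, Pi.mul_apply, Pi.pow_apply, hsub]
          simp only [Finset.mul_sum, Finset.sum_mul]
          apply Finset.sum_congr rfl
          intro n _
          rw [mul_pow, inv_pow]
          ring
        have hsummand : ∀ n ∈ Finset.range N,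
            Summable (fun g => ((N:ℂ)⁻¹ * ((χ a g₀)^n)⁻¹)
              * ((w * (χ a)^n) g * (∏ h ∈ T', F N h g) * c g)) :=
          fun n _ => ((IH _ (mul_mem hw (pow_mem (hχM a) n))).1).mul_left _
        constructor
        · exact (summable_sum hsummand).congr fun g => (hkey g).symm
        · rw [tsum_congr hkey, Summable.tsum_finsetSum hsummand]
          refine Finset.sum_eq_zero fun n _ => ?_
          rw [tsum_mul_left, (IH _ (mul_mem hw (pow_mem (hχM a) n))).2, mul_zero]
    -- norm bounds
    have hFle : ∀ (N : ℕ) (h g : G), ‖F N h g‖ ≤ 1 := by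
      intro N h g
      have hb : ‖F N h g‖ ≤ (N:ℝ)⁻¹ * N := by
        rw [hFdef]
        simp only [norm_mul, norm_inv, Complex.norm_natCast]
        gcongr
        calc ‖∑ n ∈ Finset.range N, (χ h (g - g₀))^n‖
            ≤ ∑ n ∈ Finset.range N, ‖(χ h (g - g₀))^n‖ := norm_sum_le _ _
          _ = N := by
              simp [norm_pow, (hchar _ (hχM h)).1 (g - g₀)]
      refine hb.trans ?_
      rcases Nat.eq_zero_or_pos N with h0 | h0
      · simp [h0]
      · rw [inv_mul_cancel₀ (by exact_mod_cast h0.ne' : (N:ℝ) ≠ 0)]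
    have hWle : ∀ (N : ℕ) (g : G) (T' : Finset G), ‖∏ h ∈ T', F N h g‖ ≤ 1 := by
      intro N g T'
      refine (Finset.norm_prod_le _ _).trans ?_
      refine Finset.prod_le_one (fun h _ => norm_nonneg _) (fun h _ => hFle N h g)
    have hWg₀ : ∀ N : ℕ, 0 < N → (∏ h ∈ T, F N h g₀) = 1 := by
      intro N hN
      refine Finset.prod_eq_one fun h _ => ?_
      rw [hFdef]
      simp only [sub_self, hchar0 _ (hχM h), one_pow, Finset.sum_const,
        Finset.card_range, nsmul_eq_mul, mul_one]
      rw [inv_mul_cancel₀ (by exact_mod_cast hN.ne' : (N:ℂ) ≠ 0)]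
    have hWh : ∀ (N : ℕ) (h : G), h ∈ T →
        ‖∏ h' ∈ T, F N h' h‖ ≤ (N:ℝ)⁻¹ * (2 / ‖χ h (h - g₀) - 1‖) := by
      intro N h hh
      rw [← Finset.mul_prod_erase T _ hh, norm_mul]
      have h2 : ‖∏ h' ∈ T.erase h, F N h' h‖ ≤ 1 := hWle N h _
      have h3 : ‖F N h h‖ ≤ (N:ℝ)⁻¹ * (2 / ‖χ h (h - g₀) - 1‖) := by
        set z : ℂ := χ h (h - g₀) with hzdef
        have hz1 : z ≠ 1 := hχne h hh
        have hznorm : ‖z‖ = 1 := (hchar _ (hχM h)).1 (h - g₀)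
        have hgeom : ∑ n ∈ Finset.range N, z^n = (z^N - 1) / (z - 1) := geom_sum_eq hz1 N
        rw [hFdef]
        simp only [← hzdef, hgeom, norm_mul, norm_inv, Complex.norm_natCast, norm_div]
        gcongr
        calc ‖z^N - 1‖ ≤ ‖z^N‖ + ‖(1:ℂ)‖ := norm_sub_le _ _
          _ = 2 := by rw [norm_pow, hznorm, one_pow, norm_one]; norm_num
      calc ‖F N h h‖ * ‖∏ h' ∈ T.erase h, F N h' h‖
          ≤ ((N:ℝ)⁻¹ * (2 / ‖χ h (h - g₀) - 1‖)) * 1 := by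
            refine mul_le_mul h3 h2 (norm_nonneg _) ?_
            positivity
        _ = (N:ℝ)⁻¹ * (2 / ‖χ h (h - g₀) - 1‖) := mul_one _
    -- choose N large
    set C : ℝ := ∑ h ∈ T, 2 / ‖χ h (h - g₀) - 1‖ * ‖c h‖ with hCdef
    have hC0 : 0 ≤ C := Finset.sum_nonneg fun h _ => by positivity
    obtain ⟨N, hN⟩ := exists_nat_gt (2 * C / ε)
    have hNpos : 0 < N := by
      by_contra hcon
      push_neg at hcon
      interval_cases N
      simp only [Nat.cast_zero] at hN
      have : 0 ≤ 2 * C / ε := by positivity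
      linarith
    have hNR : (0:ℝ) < N := by exact_mod_cast hNpos
    have hNC : (N:ℝ)⁻¹ * C < ε / 2 := by
      rw [div_lt_iff₀ hε] at hN
      have h1 : C < N * (ε / 2) := by nlinarith
      calc (N:ℝ)⁻¹ * C < (N:ℝ)⁻¹ * ((N:ℝ) * (ε/2)) := by
            exact mul_lt_mul_of_pos_left h1 (inv_pos.2 hNR)
        _ = ε / 2 := by field_simp
    -- summability
    have hWc_norm : Summable (fun g => ‖(∏ h ∈ T, F N h g) * c g‖) := by
      refine Summable.of_nonneg_of_le (fun g => norm_nonneg _) (fun g => ?_) hc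
      rw [norm_mul]
      calc ‖∏ h ∈ T, F N h g‖ * ‖c g‖ ≤ 1 * ‖c g‖ :=
            mul_le_mul_of_nonneg_right (hWle N g T) (norm_nonneg _)
        _ = ‖c g‖ := one_mul _
    have hWc : Summable (fun g => (∏ h ∈ T, F N h g) * c g) := hWc_norm.of_norm
    have hzero : ∑' g, (∏ h ∈ T, F N h g) * c g = 0 := by
      have := (main0 N T 1 (one_mem M)).2
      simpa using this
    have hsplit : (∑ g ∈ S, (∏ h ∈ T, F N h g) * c g)
        + ∑' g : {x : G // x ∉ S}, (∏ h ∈ T, F N h (g:G)) * c (g:G) = 0 := by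
      rw [Summable.sum_add_tsum_subtype_compl hWc S, hzero]
    have hsumS : (∑ g ∈ S, (∏ h ∈ T, F N h g) * c g)
        = c g₀ + ∑ h ∈ T, (∏ h' ∈ T, F N h' h) * c h := by
      rw [← Finset.add_sum_erase S _ hg₀S, hWg₀ N hNpos, one_mul, ← hT]
    have hcg₀ : c g₀ = -(∑ h ∈ T, (∏ h' ∈ T, F N h' h) * c h)
        - ∑' g : {x : G // x ∉ S}, (∏ h ∈ T, F N h (g:G)) * c (g:G) := by
      rw [hsumS] at hsplit
      linear_combination hsplit
    -- estimate
    have htail2 : ‖∑' g : {x : G // x ∉ S}, (∏ h ∈ T, F N h (g:G)) * c (g:G)‖ ≤ ε/2 := by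
      calc ‖∑' g : {x : G // x ∉ S}, (∏ h ∈ T, F N h (g:G)) * c (g:G)‖
          ≤ ∑' g : {x : G // x ∉ S}, ‖(∏ h ∈ T, F N h (g:G)) * c (g:G)‖ :=
            norm_tsum_le_tsum_norm (hWc_norm.subtype _)
        _ ≤ ∑' g : {x : G // x ∉ S}, ‖c (g:G)‖ := by
            refine Summable.tsum_le_tsum (fun g => ?_) (hWc_norm.subtype _) (hc.subtype _)
            rw [norm_mul]
            calc ‖∏ h ∈ T, F N h (g:G)‖ * ‖c (g:G)‖ ≤ 1 * ‖c (g:G)‖ :=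
                  mul_le_mul_of_nonneg_right (hWle N _ T) (norm_nonneg _)
              _ = ‖c (g:G)‖ := one_mul _
        _ ≤ ε/2 := le_of_lt htail
    have hmid : ‖∑ h ∈ T, (∏ h' ∈ T, F N h' h) * c h‖ ≤ (N:ℝ)⁻¹ * C := by
      calc ‖∑ h ∈ T, (∏ h' ∈ T, F N h' h) * c h‖
          ≤ ∑ h ∈ T, ‖(∏ h' ∈ T, F N h' h) * c h‖ := norm_sum_le _ _
        _ ≤ ∑ h ∈ T, (N:ℝ)⁻¹ * (2 / ‖χ h (h - g₀) - 1‖) * ‖c h‖ := by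
            refine Finset.sum_le_sum fun h hh => ?_
            rw [norm_mul]
            exact mul_le_mul_of_nonneg_right (hWh N h hh) (norm_nonneg _)
        _ = (N:ℝ)⁻¹ * C := by
            rw [hCdef, Finset.mul_sum]
            refine Finset.sum_congr rfl fun h _ => ?_
            ring
    calc ‖c g₀‖ = ‖-(∑ h ∈ T, (∏ h' ∈ T, F N h' h) * c h)
        - ∑' g : {x : G // x ∉ S}, (∏ h ∈ T, F N h (g:G)) * c (g:G)‖ := by rw [hcg₀]
      _ ≤ ‖∑ h ∈ T, (∏ h' ∈ T, F N h' h) * c h‖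
          + ‖∑' g : {x : G // x ∉ S}, (∏ h ∈ T, F N h (g:G)) * c (g:G)‖ := by
            refine (norm_sub_le _ _).trans ?_
            rw [norm_neg]
      _ ≤ (N:ℝ)⁻¹ * C + ε/2 := add_le_add hmid htail2
      _ ≤ ε/2 + ε/2 := by linarith
      _ = ε := by ring
  have : ‖c g₀‖ ≤ 0 := le_of_forall_pos_le_add (by intro ε hε; simpa using main ε hε)
  exact norm_le_zero_iff.1 this

open scoped ComplexInnerProductSpace ENNReal

/-- Operator-theoretic content of Theorem 9.1 of the paper: a closed subspace of
`ℓ²(G, K)` invariant under all translations and under the diagonal unitaries given by a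
point-separating, conjugation-closed family of characters of `G` is of the form
`{x : x(g) ∈ K̃ for all g}` for a closed subspace `K̃ ⊆ K`. -/
theorem stmt11 {G : Type*} [AddCommGroup G] {K : Type*} [NormedAddCommGroup K]
    [InnerProductSpace ℂ K] [CompleteSpace K]
    (X : Set (G → ℂ))
    (hchar : ∀ χ ∈ X, (∀ g : G, ‖χ g‖ = 1) ∧ ∀ g g' : G, χ (g + g') = χ g * χ g')
    (hconj : ∀ χ ∈ X, (fun g : G => (starRingEnd ℂ) (χ g)) ∈ X)
    (hsep : ∀ g : G, g ≠ 0 → ∃ χ ∈ X, χ g ≠ 1)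
    (V : Submodule ℂ (lp (fun _ : G => K) 2))
    (hVclosed : IsClosed (V : Set (lp (fun _ : G => K) 2)))
    (htrans : ∀ a : G, ∀ x ∈ V, ∀ y : lp (fun _ : G => K) 2,
      (∀ g : G, y g = x (g - a)) → y ∈ V)
    (hdiag : ∀ χ ∈ X, ∀ x ∈ V, ∀ y : lp (fun _ : G => K) 2,
      (∀ g : G, y g = χ g • x g) → y ∈ V) :
    ∃ Kt : Submodule ℂ K, IsClosed (Kt : Set K) ∧
      ∀ x : lp (fun _ : G => K) 2, x ∈ V ↔ ∀ g : G, x g ∈ Kt := by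
  classical
  -- membership in lp for pointwise bounded multipliers
  have memlp_smul : ∀ (w : G → ℂ), (∀ g, ‖w g‖ ≤ 1) → ∀ x : lp (fun _ : G => K) 2,
      Memℓp (fun g => w g • x g) 2 := by
    intro w hw x
    have hx : Summable fun g => ‖x g‖ ^ (2:ℝ≥0∞).toReal :=
      (memℓp_gen_iff (by norm_num)).1 (lp.memℓp x)
    apply memℓp_gen
    refine Summable.of_nonneg_of_le (fun g => ?_) (fun g => ?_) hx
    · positivity
    · refine Real.rpow_le_rpow (norm_nonneg _) ?_ (by norm_num)
      rw [norm_smul]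
      calc ‖w g‖ * ‖x g‖ ≤ 1 * ‖x g‖ :=
            mul_le_mul_of_nonneg_right (hw g) (norm_nonneg _)
        _ = ‖x g‖ := one_mul _
  -- membership in lp for shifts
  have memlp_shift : ∀ (a : G) (x : lp (fun _ : G => K) 2),
      Memℓp (fun g => x (g - a)) 2 := by
    intro a x
    have hx : Summable fun g => ‖x g‖ ^ (2:ℝ≥0∞).toReal :=
      (memℓp_gen_iff (by norm_num)).1 (lp.memℓp x)
    apply memℓp_gen
    have heq : (fun g : G => ‖x (g - a)‖ ^ (2:ℝ≥0∞).toReal)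
        = (fun g : G => ‖x g‖ ^ (2:ℝ≥0∞).toReal) ∘ (Equiv.subRight a) := rfl
    rw [heq, Equiv.summable_iff]
    exact hx
  -- the multiplicative monoid generated by X
  set M : Submonoid (G → ℂ) := Submonoid.closure X with hMdef
  have hXM : X ⊆ (M : Set (G → ℂ)) := Submonoid.subset_closure
  have hMchar : ∀ w ∈ M, (∀ g : G, ‖w g‖ = 1) ∧ ∀ g g' : G, w (g + g') = w g * w g' := by
    intro w hw
    induction hw using Submonoid.closure_induction with
    | mem χ hχ => exact hchar χ hχ
    | one => exact ⟨fun g => by simp, fun g g' => by simp⟩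
    | mul u v hu hv hu' hv' =>
      refine ⟨fun g => ?_, fun g g' => ?_⟩
      · simp only [Pi.mul_apply, norm_mul, hu'.1 g, hv'.1 g, one_mul]
      · simp only [Pi.mul_apply, hu'.2 g g', hv'.2 g g']; ring
  -- V is invariant under multiplication by any element of M
  have hdiagM : ∀ w ∈ M, ∀ x ∈ V, ∃ y, y ∈ V ∧ ∀ g : G, y g = w g • x g := by
    intro w hw
    induction hw using Submonoid.closure_induction with
    | mem χ hχ =>
      intro x hx
      refine ⟨⟨fun g => χ g • x g, memlp_smul χ (fun g => le_of_eq ((hchar χ hχ).1 g)) x⟩,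
        hdiag χ hχ x hx _ (fun g => rfl), fun g => rfl⟩
    | one => exact fun x hx => ⟨x, hx, fun g => by simp⟩
    | mul u v hu hv hu' hv' =>
      intro x hx
      obtain ⟨y, hyV, hy⟩ := hv' x hx
      obtain ⟨z, hzV, hz⟩ := hu' y hyV
      refine ⟨z, hzV, fun g => ?_⟩
      rw [hz g, hy g, smul_smul, Pi.mul_apply]
  -- key orthogonality relation
  have hkey : ∀ y, y ∈ Vᗮ → ∀ v ∈ V, ∀ g h : G, (inner ℂ (y g) (v h) : ℂ) = 0 := by
    intro y hy v hv g h
    have hv'ex : ∃ y', y' ∈ V ∧ ∀ g' : G, y' g' = v (g' - (g - h)) := by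
      refine ⟨⟨fun g' => v (g' - (g - h)), memlp_shift (g - h) v⟩, ?_, fun g' => rfl⟩
      exact htrans (g - h) v hv _ (fun g' => rfl)
    obtain ⟨v', hv'V, hv'⟩ := hv'ex
    set c : G → ℂ := fun g' => (inner ℂ (y g') (v' g') : ℂ) with hcdef
    have hc : Summable fun g' => ‖c g'‖ := by
      refine Summable.of_nonneg_of_le (fun _ => norm_nonneg _)
        (fun g' => norm_inner_le_norm _ _) (lp.summable_mul ?_ y v')
      rw [Real.holderConjugate_iff]
      norm_num
    have hzz : ∀ w ∈ M, ∑' g', w g' * c g' = 0 := by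
      intro w hw
      obtain ⟨u, huV, hu⟩ := hdiagM w hw v' hv'V
      have h0 : (inner ℂ (y) (u) : ℂ) = 0 :=
        inner_eq_zero_symm.1 ((Submodule.mem_orthogonal _ _).1 hy u huV)
      calc ∑' g', w g' * c g' = ∑' g', (inner ℂ (y g') (u g') : ℂ) := by
            refine tsum_congr fun g' => ?_
            rw [hu g', inner_smul_right]
        _ = (inner ℂ (y) (u) : ℂ) := (lp.inner_eq_tsum y u).symm
        _ = 0 := h0
    have hsepM : ∀ g : G, g ≠ 0 → ∃ w ∈ M, w g ≠ 1 := by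
      intro g hg
      obtain ⟨χ, hχ, hχ1⟩ := hsep g hg
      exact ⟨χ, hXM hχ, hχ1⟩
    have := key_fourier M hMchar hsepM c hc hzz g
    rw [hcdef] at this
    simpa [hv' g, sub_sub_cancel] using this
  -- the subspace of K
  refine ⟨(Submodule.span ℂ {k : K | ∃ v, v ∈ V ∧ ∃ h : G, v h = k}).topologicalClosure,
    Submodule.isClosed_topologicalClosure _, fun x => ⟨fun hx g => ?_, fun hx => ?_⟩⟩
  · exact Submodule.le_topologicalClosure _ (Submodule.subset_span ⟨x, hx, g, rfl⟩)
  · haveI : CompleteSpace V := hVclosed.completeSpace_coe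
    rw [← Submodule.orthogonal_orthogonal V, Submodule.mem_orthogonal]
    intro y hy
    have hg0 : ∀ g : G, (inner ℂ (y g) (x g) : ℂ) = 0 := by
      intro g
      have hort : (Submodule.span ℂ {k : K | ∃ v, v ∈ V ∧ ∃ h : G, v h = k}).topologicalClosure
          ≤ LinearMap.ker ((innerSL ℂ (E := K) (y g) : K →L[ℂ] ℂ) : K →ₗ[ℂ] ℂ) := by
        refine Submodule.topologicalClosure_minimal _ ?_ ?_
        · rw [Submodule.span_le]
          rintro k ⟨v, hv, h, rfl⟩
          simpa using hkey y hy v hv g h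
        · exact ContinuousLinearMap.isClosed_ker (innerSL ℂ (y g))
      simpa using hort (hx g)
    calc (inner ℂ (y) (x) : ℂ) = ∑' g, (inner ℂ (y g) (x g) : ℂ) := lp.inner_eq_tsum y x
      _ = 0 := by simp [hg0]
end

section
/- Let G be an additive abelian group and H = ℓ²(G) the Hilbert space of square-summable complex families indexed by G. For a ∈ G let T_a : H → H be the translation unitary (T_a x)(g) = x(g − a). A character of G is a map χ : G → ℂ with |χ(g)| = 1 for all g and χ(g + g') = χ(g)·χ(g'); for a character χ let D_χ : H → H be the diagonal unitary (D_χ x)(g) = χ(g)·x(g). Let X be a set of characters of G that is closed under pointwise complex conjugation and separates points, i.e. for every g ≠ 0 there is χ ∈ X with χ(g) ≠ 1. Then the only closed linear subspaces V ⊆ H with T_a(V) ⊆ V for every a ∈ G and D_χ(V) ⊆ V for every χ ∈ X are V = {0} and V = H. -/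
open scoped BigOperators ENNReal

namespace Stmt12Aux

lemma rpow_two_eq (x : ℝ) : x ^ ((2:ℝ≥0∞).toReal) = x ^ (2:ℕ) := by
  rw [show ((2:ℝ≥0∞).toReal) = ((2:ℕ):ℝ) by norm_num, Real.rpow_natCast]

lemma unimod_conj_mul {z : ℂ} (h : ‖z‖ = 1) : (starRingEnd ℂ) z * z = 1 := by
  rw [mul_comm, Complex.mul_conj]
  norm_cast
  rw [show Complex.normSq z = ‖z‖^2 by rw [Complex.normSq_eq_norm_sq], h]
  norm_num

variable {G : Type*} [AddCommGroup G]

lemma norm_sq_eq (z : lp (fun _ : G => ℂ) 2) : ‖z‖ ^ (2:ℕ) = ∑' g, ‖z g‖ ^ (2:ℕ) := by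
  have := lp.norm_rpow_eq_tsum (p := 2) (E := fun _ : G => ℂ) (by norm_num) z
  simpa [rpow_two_eq] using this

lemma summable_sq (z : lp (fun _ : G => ℂ) 2) : Summable (fun g => ‖z g‖ ^ (2:ℕ)) := by
  have := (lp.memℓp z).summable (p := 2) (by norm_num)
  simpa [rpow_two_eq] using this

lemma memℓp_of_le {u : G → ℂ} (x : lp (fun _ : G => ℂ) 2) (h : ∀ g, ‖u g‖ ≤ ‖x g‖) :
    Memℓp u 2 := by
  apply memℓp_gen
  refine Summable.of_nonneg_of_le (fun g => ?_) (fun g => ?_) ((lp.memℓp x).summable (by norm_num))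
  · positivity
  · exact Real.rpow_le_rpow (norm_nonneg _) (h g) (by norm_num)

lemma mul_mem (X : Set (G → ℂ)) (hchar : ∀ χ ∈ X, ∀ g : G, ‖χ g‖ = 1)
    (V : Submodule ℂ (lp (fun _ : G => ℂ) 2))
    (hdiag : ∀ χ ∈ X, ∀ x ∈ V, ∀ y : lp (fun _ : G => ℂ) 2,
      (∀ g : G, y g = χ g * x g) → y ∈ V)
    {f : G → ℂ} (hf : f ∈ Algebra.adjoin ℂ X) :
    ∀ x ∈ V, ∃ y, y ∈ V ∧ ∀ g : G, y g = f g * x g := by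
  induction hf using Algebra.adjoin_induction with
  | mem χ hχ =>
    intro x hx
    have hm : Memℓp (fun g => χ g * x g) 2 := by
      refine memℓp_of_le x (fun g => ?_)
      rw [norm_mul, hchar χ hχ g, one_mul]
    exact ⟨⟨_, hm⟩, hdiag χ hχ x hx _ (fun g => rfl), fun g => rfl⟩
  | algebraMap c =>
    intro x hx
    refine ⟨c • x, V.smul_mem c hx, fun g => ?_⟩
    rw [lp.coeFn_smul]
    simp [Pi.algebraMap_apply, Algebra.algebraMap_self_apply]
  | add f₁ f₂ h₁ h₂ ih₁ ih₂ =>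
    intro x hx
    obtain ⟨y₁, hy₁V, hy₁⟩ := ih₁ x hx
    obtain ⟨y₂, hy₂V, hy₂⟩ := ih₂ x hx
    refine ⟨y₁ + y₂, V.add_mem hy₁V hy₂V, fun g => ?_⟩
    rw [lp.coeFn_add]
    simp [hy₁ g, hy₂ g, add_mul]
  | mul f₁ f₂ h₁ h₂ ih₁ ih₂ =>
    intro x hx
    obtain ⟨y₂, hy₂V, hy₂⟩ := ih₂ x hx
    obtain ⟨y₁, hy₁V, hy₁⟩ := ih₁ y₂ hy₂V
    refine ⟨y₁, hy₁V, fun g => ?_⟩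
    rw [hy₁ g, hy₂ g, Pi.mul_apply]
    ring

lemma kernel_mem (X : Set (G → ℂ)) {χ : G → ℂ} (hχ : χ ∈ X) (c : ℂ) (N : ℕ) :
    (fun h : G => (N:ℂ)⁻¹ * ∑ n ∈ Finset.range N, (c * χ h)^n) ∈ Algebra.adjoin ℂ X := by
  have he : (fun h : G => (N:ℂ)⁻¹ * ∑ n ∈ Finset.range N, (c * χ h)^n)
      = (N:ℂ)⁻¹ • ∑ n ∈ Finset.range N, c^n • χ^n := by
    funext h
    simp [Finset.sum_apply, Pi.smul_apply, Pi.pow_apply, smul_eq_mul, mul_pow, Finset.mul_sum]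
  rw [he]
  exact Subalgebra.smul_mem _ (sum_mem fun n _ =>
    Subalgebra.smul_mem _ (pow_mem (Algebra.subset_adjoin hχ) n) _) _

lemma kernel_norm_le_one {ω : ℂ} (hω1 : ‖ω‖ = 1) (N : ℕ) :
    ‖(N:ℂ)⁻¹ * ∑ n ∈ Finset.range N, ω^n‖ ≤ 1 := by
  rcases Nat.eq_zero_or_pos N with h | h
  · simp [h]
  have h1 : ‖∑ n ∈ Finset.range N, ω^n‖ ≤ (N:ℝ) := by
    calc ‖∑ n ∈ Finset.range N, ω^n‖ ≤ ∑ n ∈ Finset.range N, ‖ω^n‖ := norm_sum_le _ _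
    _ = (N:ℝ) := by simp [norm_pow, hω1]
  rw [norm_mul, show ‖(N:ℂ)⁻¹‖ = (N:ℝ)⁻¹ by simp]
  calc (N:ℝ)⁻¹ * ‖∑ n ∈ Finset.range N, ω^n‖ ≤ (N:ℝ)⁻¹ * (N:ℝ) := by gcongr
  _ = 1 := by field_simp

lemma kernel_small {ω : ℂ} (hω1 : ‖ω‖ = 1) (hω : ω ≠ 1) {N : ℕ} (hN : 0 < N) :
    ‖(N:ℂ)⁻¹ * ∑ n ∈ Finset.range N, ω^n‖ ≤ 2 / ((N:ℝ) * ‖ω - 1‖) := by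
  have hωd : 0 < ‖ω - 1‖ := by rwa [norm_pos_iff, sub_ne_zero]
  have h2 : ‖ω^N - 1‖ ≤ 2 := by
    calc ‖ω^N - 1‖ ≤ ‖ω^N‖ + ‖(1:ℂ)‖ := norm_sub_le _ _
    _ = 2 := by rw [norm_pow, hω1]; norm_num
  rw [geom_sum_eq hω, norm_mul, norm_div, show ‖(N:ℂ)⁻¹‖ = (N:ℝ)⁻¹ by simp]
  have hN0 : (0:ℝ) < N := by exact_mod_cast hN
  calc (N:ℝ)⁻¹ * (‖ω^N - 1‖ / ‖ω - 1‖) ≤ (N:ℝ)⁻¹ * (2 / ‖ω - 1‖) := by gcongr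
  _ = 2 / ((N:ℝ) * ‖ω - 1‖) := by field_simp

end Stmt12Aux

/-- Final Corollary of the paper (irreducibility): in `ℓ²(G)`, the only closed subspaces
invariant under all translations and under the diagonal unitaries given by a
point-separating, conjugation-closed family of characters of `G` are `{0}` and the whole
space. -/
theorem stmt12 {G : Type*} [AddCommGroup G]
    (X : Set (G → ℂ))
    (hchar : ∀ χ ∈ X, (∀ g : G, ‖χ g‖ = 1) ∧ ∀ g g' : G, χ (g + g') = χ g * χ g')
    (hconj : ∀ χ ∈ X, (fun g : G => (starRingEnd ℂ) (χ g)) ∈ X)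
    (hsep : ∀ g : G, g ≠ 0 → ∃ χ ∈ X, χ g ≠ 1)
    (V : Submodule ℂ (lp (fun _ : G => ℂ) 2))
    (hVclosed : IsClosed (V : Set (lp (fun _ : G => ℂ) 2)))
    (htrans : ∀ a : G, ∀ x ∈ V, ∀ y : lp (fun _ : G => ℂ) 2,
      (∀ g : G, y g = x (g - a)) → y ∈ V)
    (hdiag : ∀ χ ∈ X, ∀ x ∈ V, ∀ y : lp (fun _ : G => ℂ) 2,
      (∀ g : G, y g = χ g * x g) → y ∈ V) :
    V = ⊥ ∨ V = ⊤ := by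
  classical
  by_cases hV : V = ⊥
  · exact Or.inl hV
  right
  haveI : Fact (1 ≤ (2:ℝ≥0∞)) := ⟨by norm_num⟩
  obtain ⟨x, hxV, hxne⟩ := (Submodule.ne_bot_iff V).mp hV
  obtain ⟨g₀, hg₀⟩ : ∃ g₀, x g₀ ≠ 0 := by
    by_contra h
    push_neg at h
    apply hxne
    rw [lp.eq_zero_iff_coeFn_eq_zero]
    funext g
    simpa using h g
  set δ : lp (fun _ : G => ℂ) 2 := lp.single (E := fun _ : G => ℂ) 2 g₀ (x g₀) with hδ
  have hδg₀ : δ g₀ = x g₀ := by rw [hδ]; exact lp.single_apply_self (E := fun _ : G => ℂ) 2 g₀ (x g₀)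
  have hδne : ∀ h : G, h ≠ g₀ → δ h = 0 := by
    intro h hh
    rw [hδ]; exact lp.single_apply_ne (E := fun _ : G => ℂ) 2 g₀ _ hh
  -- Step 1 : δ ∈ V
  have hδV : δ ∈ V := by
    have hδcl : δ ∈ closure (V : Set (lp (fun _ : G => ℂ) 2)) := by
      rw [Metric.mem_closure_iff]
      intro ε hε
      set M : ℝ := ‖x‖ + 1 with hM
      have hM0 : 0 < M := by
        have := norm_nonneg x
        rw [hM]; linarith
      set η : ℝ := ε / (2 * M) with hη
      have hη0 : 0 < η := by rw [hη]; positivity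
      obtain ⟨s₀, hs₀⟩ := (Stmt12Aux.summable_sq x).tsum_vanishing
        (Iio_mem_nhds (by positivity : (0:ℝ) < ε^2/2))
      set S : Finset G := insert g₀ s₀ with hS
      have hg₀S : g₀ ∈ S := Finset.mem_insert_self g₀ s₀
      -- kernels
      have key : ∀ g : G, ∃ K : G → ℂ, K ∈ Algebra.adjoin ℂ X ∧ (∀ h, ‖K h‖ ≤ 1) ∧
          K g₀ = 1 ∧ (g ∈ S.erase g₀ → ‖K g‖ ≤ η) := by
        intro g
        by_cases hg : g ∈ S.erase g₀
        · have hgne : g - g₀ ≠ 0 := sub_ne_zero.2 (Finset.ne_of_mem_erase hg)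
          obtain ⟨χ, hχX, hχne⟩ := hsep _ hgne
          obtain ⟨hχu, hχm⟩ := hchar χ hχX
          set c : ℂ := (starRingEnd ℂ) (χ g₀) with hc
          have hcu : ‖c‖ = 1 := by rw [hc, RCLike.norm_conj, hχu g₀]
          have hcχg₀ : c * χ g₀ = 1 := Stmt12Aux.unimod_conj_mul (hχu g₀)
          set ω : ℂ := c * χ g with hω
          have hωu : ‖ω‖ = 1 := by rw [hω, norm_mul, hcu, hχu g, one_mul]
          have hωne : ω ≠ 1 := by
            intro hcontr
            apply hχne
            have h1 : χ g = χ (g - g₀) * χ g₀ := by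
              rw [← hχm, sub_add_cancel]
            rw [hω, h1] at hcontr
            calc χ (g - g₀) = χ (g - g₀) * (c * χ g₀) := by rw [hcχg₀, mul_one]
            _ = c * (χ (g - g₀) * χ g₀) := by ring
            _ = 1 := hcontr
          have hωd : 0 < ‖ω - 1‖ := by rwa [norm_pos_iff, sub_ne_zero]
          have hpos : (0:ℝ) < 2 / (η * ‖ω - 1‖) := by positivity
          obtain ⟨N, hN⟩ := exists_nat_gt (2 / (η * ‖ω - 1‖))
          have hN0 : 0 < N := by exact_mod_cast hpos.trans hN
          refine ⟨fun h => (N:ℂ)⁻¹ * ∑ n ∈ Finset.range N, (c * χ h)^n,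
            Stmt12Aux.kernel_mem X hχX c N, fun h => ?_, ?_, fun _ => ?_⟩
          · exact Stmt12Aux.kernel_norm_le_one (by rw [norm_mul, hcu, hχu h, one_mul]) N
          · show (N:ℂ)⁻¹ * ∑ n ∈ Finset.range N, (c * χ g₀)^n = 1
            rw [hcχg₀]
            simp only [one_pow, Finset.sum_const, Finset.card_range, nsmul_eq_mul, mul_one]
            rw [inv_mul_cancel₀ (by exact_mod_cast hN0.ne' : (N:ℂ) ≠ 0)]
          · refine le_trans (Stmt12Aux.kernel_small hωu hωne hN0) ?_
            have h2 : 2 < (N:ℝ) * (η * ‖ω - 1‖) := (div_lt_iff₀ (by positivity)).mp hN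
            rw [div_le_iff₀ (by positivity)]
            nlinarith
        · exact ⟨(1 : G → ℂ), one_mem _, fun h => by simp, by simp, fun hcontr => absurd hcontr hg⟩
      choose K hKmem hKbd hKg₀ hKsm using key
      set f : G → ℂ := ∏ g ∈ S.erase g₀, K g with hf
      have hfmem : f ∈ Algebra.adjoin ℂ X := prod_mem (fun g _ => hKmem g)
      have hfapp : ∀ h, f h = ∏ g ∈ S.erase g₀, K g h := fun h => by
        rw [hf, Finset.prod_apply]
      have hfbd : ∀ h, ‖f h‖ ≤ 1 := by
        intro h
        rw [hfapp, norm_prod]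
        exact Finset.prod_le_one (fun g _ => norm_nonneg _) (fun g _ => hKbd g h)
      have hfg₀ : f g₀ = 1 := by
        rw [hfapp]; exact Finset.prod_eq_one (fun g _ => hKg₀ g)
      have hfsm : ∀ g ∈ S.erase g₀, ‖f g‖ ≤ η := by
        intro g hg
        rw [hfapp, ← Finset.mul_prod_erase _ _ hg, norm_mul]
        calc ‖K g g‖ * ‖∏ g' ∈ (S.erase g₀).erase g, K g' g‖ ≤ η * 1 := by
              refine mul_le_mul (hKsm g hg) ?_ (norm_nonneg _) hη0.le
              rw [norm_prod]
              exact Finset.prod_le_one (fun g' _ => norm_nonneg _) (fun g' _ => hKbd g' g)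
        _ = η := mul_one η
      obtain ⟨y, hyV, hy⟩ :=
        Stmt12Aux.mul_mem X (fun χ hχ => (hchar χ hχ).1) V hdiag hfmem x hxV
      refine ⟨y, hyV, ?_⟩
      -- the distance estimate
      have hsub : ∀ h, (y - δ) h = f h * (x - δ) h := by
        intro h
        rw [lp.coeFn_sub, Pi.sub_apply, lp.coeFn_sub, Pi.sub_apply, hy h]
        by_cases hh : h = g₀
        · subst hh
          rw [hδg₀, hfg₀]; ring
        · rw [hδne h hh]; ring
      have hxδ : ∀ h, ‖(x - δ) h‖^(2:ℕ) ≤ ‖x h‖^(2:ℕ) := by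
        intro h
        rw [lp.coeFn_sub, Pi.sub_apply]
        by_cases hh : h = g₀
        · subst hh; rw [hδg₀, sub_self]; simp
        · rw [hδne h hh, sub_zero]
      have hpt : ∀ h, ‖(y - δ) h‖^(2:ℕ) ≤ η^2 * ‖(x - δ) h‖^(2:ℕ) +
          Set.indicator (↑S : Set G)ᶜ (fun h => ‖x h‖^(2:ℕ)) h := by
        intro h
        rw [hsub h, norm_mul, mul_pow]
        by_cases hh : h ∈ S
        · rw [Set.indicator_of_notMem (by simpa using hh), add_zero]
          by_cases hh0 : h = g₀
          · have hz : (x - δ) h = 0 := by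
              rw [lp.coeFn_sub, Pi.sub_apply, hh0, hδg₀, sub_self]
            rw [hz]; simp
          · have hmem : h ∈ S.erase g₀ := Finset.mem_erase.2 ⟨hh0, hh⟩
            exact mul_le_mul_of_nonneg_right
              (pow_le_pow_left₀ (norm_nonneg _) (hfsm h hmem) 2) (by positivity)
        · rw [Set.indicator_of_mem (by simpa using hh)]
          have hxd : (x - δ) h = x h := by
            rw [lp.coeFn_sub, Pi.sub_apply, hδne h (fun hc => hh (hc ▸ hg₀S)), sub_zero]
          rw [hxd]
          have h1 : ‖f h‖^(2:ℕ) * ‖x h‖^(2:ℕ) ≤ 1 * ‖x h‖^(2:ℕ) :=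
            mul_le_mul_of_nonneg_right
              (by simpa using pow_le_pow_left₀ (norm_nonneg (f h)) (hfbd h) 2) (by positivity)
          nlinarith [sq_nonneg (η * ‖x h‖), sq_nonneg ‖x h‖, norm_nonneg (x h)]
      -- summing up
      have hsumyd := Stmt12Aux.summable_sq (y - δ)
      have hsumxd := Stmt12Aux.summable_sq (x - δ)
      have hsumx := Stmt12Aux.summable_sq x
      have hsumind : Summable (Set.indicator (↑S : Set G)ᶜ (fun h => ‖x h‖^(2:ℕ))) :=
        hsumx.indicator _
      have hsumrhs : Summable (fun h => η^2 * ‖(x - δ) h‖^(2:ℕ) +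
          Set.indicator (↑S : Set G)ᶜ (fun h => ‖x h‖^(2:ℕ)) h) :=
        (hsumxd.mul_left _).add hsumind
      have htail : ∑' h, Set.indicator (↑S : Set G)ᶜ (fun h => ‖x h‖^(2:ℕ)) h < ε^2/2 := by
        rw [← tsum_subtype]
        have hdisj : Disjoint ((↑S : Set G)ᶜ) (↑s₀ : Set G) := by
          rw [Set.disjoint_left]
          intro a ha ha'
          exact ha (by rw [hS]; exact Finset.mem_coe.2 (Finset.mem_insert_of_mem ha'))
        exact hs₀ _ hdisj
      have hxdle : ∑' h, ‖(x - δ) h‖^(2:ℕ) ≤ ‖x‖^(2:ℕ) := by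
        rw [Stmt12Aux.norm_sq_eq x]
        exact Summable.tsum_le_tsum hxδ hsumxd hsumx
      have hηx : η^2 * ‖x‖^(2:ℕ) < ε^2/2 := by
        have hxM : ‖x‖ ≤ M := by rw [hM]; linarith
        have h1 : η * ‖x‖ ≤ ε / 2 := by
          have : η * M = ε / 2 := by rw [hη]; field_simp
          calc η * ‖x‖ ≤ η * M := by gcongr
          _ = ε / 2 := this
        have h2 : (η * ‖x‖)^2 ≤ (ε/2)^2 := pow_le_pow_left₀ (by positivity) h1 2
        nlinarith [h2, mul_pos hε hε]
      have hkey : ‖y - δ‖^(2:ℕ) < ε^2 := by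
        rw [Stmt12Aux.norm_sq_eq (y - δ)]
        calc ∑' h, ‖(y - δ) h‖^(2:ℕ)
            ≤ ∑' h, (η^2 * ‖(x - δ) h‖^(2:ℕ) +
              Set.indicator (↑S : Set G)ᶜ (fun h => ‖x h‖^(2:ℕ)) h) :=
              Summable.tsum_le_tsum hpt hsumyd hsumrhs
        _ = η^2 * (∑' h, ‖(x - δ) h‖^(2:ℕ)) +
              ∑' h, Set.indicator (↑S : Set G)ᶜ (fun h => ‖x h‖^(2:ℕ)) h := by
              rw [Summable.tsum_add (hsumxd.mul_left _) hsumind, tsum_mul_left]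
        _ ≤ η^2 * ‖x‖^(2:ℕ) +
              ∑' h, Set.indicator (↑S : Set G)ᶜ (fun h => ‖x h‖^(2:ℕ)) h := by
              gcongr
        _ < ε^2/2 + ε^2/2 := add_lt_add hηx htail
        _ = ε^2 := by ring
      have hlt : ‖y - δ‖ < ε := lt_of_pow_lt_pow_left₀ 2 hε.le hkey
      rw [dist_comm, dist_eq_norm]
      exact hlt
    rwa [hVclosed.closure_eq] at hδcl
  -- Step 2 : all singles are in V
  have hsingle : ∀ (a : G) (c : ℂ), lp.single 2 a c ∈ V := by
    intro a c
    have h1 : lp.single 2 g₀ c ∈ V := by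
      have he : lp.single 2 g₀ c = (c * (x g₀)⁻¹) • δ := by
        rw [hδ, ← lp.single_smul]
        congr 1
        rw [smul_eq_mul]
        field_simp
      rw [he]; exact V.smul_mem _ hδV
    refine htrans (a - g₀) _ h1 (lp.single 2 a c) ?_
    intro g
    by_cases hg : g = a
    · subst hg
      rw [lp.single_apply_self, show g - (g - g₀) = g₀ by abel, lp.single_apply_self]
    · rw [lp.single_apply_ne 2 a _ hg, lp.single_apply_ne]
      intro hc
      apply hg
      have : g - (a - g₀) = g₀ := hc
      have := sub_eq_iff_eq_add.mp this
      rw [this]; abel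
  -- Step 3 : V = ⊤
  rw [eq_top_iff]
  intro z _
  have hz := lp.hasSum_single (by norm_num : (2:ℝ≥0∞) ≠ ⊤) z
  have hmem : ∀ s : Finset G, ∑ i ∈ s, lp.single 2 i (z i) ∈ V :=
    fun s => sum_mem (fun i _ => hsingle i (z i))
  exact hVclosed.mem_of_tendsto hz (Filter.Eventually.of_forall hmem)
end
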